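/- arXiv:2605.25230 — 5 statements merged into one kernel-verified Lean document; each statement's English description precedes it below -/
import Mathlib

section
/- Tube stability (Proposition 1). In the stochastic inner recursion setup, for every m = 1, ..., M the in-tube second moment of the deviation satisfies E[‖e_m‖² · 1_{τ_r > m}] ≤ σ²ν² · Σ_{j=0}^{m−1} ρ_r^{2j} ≤ σ²ν² / (1 − ρ_r²). -/
open MeasureTheory ProbabilityTheory

noncomputable def tubeTraj {d : ℕ} (F : EuclideanSpace ℝ (Fin d) → EuclideanSpace ℝ (Fin d))
    (z1 : EuclideanSpace ℝ (Fin d)) (σ : ℝ) (x : ℕ → EuclideanSpace ℝ (Fin d)) :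
    ℕ → EuclideanSpace ℝ (Fin d)
  | 0 => 0
  | 1 => z1 + σ • x 0
  | (k+2) => F (tubeTraj F z1 σ x (k+1)) + σ • x (k+1)

lemma tubeTraj_congr {d : ℕ} (F : EuclideanSpace ℝ (Fin d) → EuclideanSpace ℝ (Fin d))
    (z1 : EuclideanSpace ℝ (Fin d)) (σ : ℝ) :
    ∀ (k : ℕ) (x y : ℕ → EuclideanSpace ℝ (Fin d)), (∀ i, i < k → x i = y i) →
      tubeTraj F z1 σ x k = tubeTraj F z1 σ y k
  | 0, x, y, h => rfl
  | 1, x, y, h => by simp [tubeTraj, h 0 one_pos]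
  | (k+2), x, y, h => by
    have ih := tubeTraj_congr F z1 σ (k+1) x y (fun i hi => h i (hi.trans (Nat.lt_succ_self _)))
    simp only [tubeTraj, ih, h (k+1) (Nat.lt_succ_self _)]

lemma tubeTraj_measurable {d : ℕ} {F : EuclideanSpace ℝ (Fin d) → EuclideanSpace ℝ (Fin d)}
    (hF : Measurable F) (z1 : EuclideanSpace ℝ (Fin d)) (σ : ℝ) :
    ∀ k : ℕ, Measurable (fun x : ℕ → EuclideanSpace ℝ (Fin d) => tubeTraj F z1 σ x k)
  | 0 => measurable_const
  | 1 => by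
    simp only [tubeTraj]
    exact measurable_const.add ((measurable_pi_apply 0).const_smul σ)
  | (k+2) => by
    simp only [tubeTraj]
    exact (hF.comp (tubeTraj_measurable hF z1 σ (k+1))).add
      ((measurable_pi_apply (k+1)).const_smul σ)

lemma euclid_coord_abs_le_norm {d : ℕ} (x : EuclideanSpace ℝ (Fin d)) (i : Fin d) :
    |x i| ≤ ‖x‖ := by
  have h1 : |x i| = Real.sqrt (|x i| ^ 2) := by
    rw [Real.sqrt_sq (abs_nonneg _)]
  rw [h1, EuclideanSpace.norm_eq]
  apply Real.sqrt_le_sqrt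
  exact Finset.single_le_sum (f := fun j => ‖x j‖ ^ 2) (fun j _ => by positivity)
    (Finset.mem_univ i)

lemma geom_two_sum_le {ρ : ℝ} (hρ0 : 0 ≤ ρ) (hρ1 : ρ < 1) (m : ℕ) :
    ∑ j ∈ Finset.range m, ρ ^ (2 * j) ≤ 1 / (1 - ρ ^ 2) := by
  have hq0 : 0 ≤ ρ ^ 2 := sq_nonneg ρ
  have hq1 : ρ ^ 2 < 1 := by nlinarith
  have hlt : 0 < 1 - ρ ^ 2 := by linarith
  have hs : ∑ j ∈ Finset.range m, ρ ^ (2 * j) = ∑ j ∈ Finset.range m, (ρ ^ 2) ^ j := by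
    simp [pow_mul]
  rw [hs]
  rw [geom_sum_eq (by linarith : ρ ^ 2 ≠ 1)]
  have hpow : (ρ ^ 2) ^ m ≤ 1 := pow_le_one₀ hq0 hq1.le
  calc ((ρ ^ 2) ^ m - 1) / (ρ ^ 2 - 1) = (1 - (ρ ^ 2) ^ m) / (1 - ρ ^ 2) := by
        rw [← neg_div_neg_eq]; ring_nf
    _ ≤ 1 / (1 - ρ ^ 2) := by
        gcongr
        have := pow_nonneg hq0 m
        linarith


/-- **Tube stability (Proposition 1).**
In the stochastic inner recursion setup — with independent mean-zero noise
`ξ 0, …, ξ (M-1)` of second moment at most `ν²`, deterministic trajectory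
`z (m+1) = F (z m)`, stochastic trajectory `ζ 1 = z 1 + σ • ξ 0`,
`ζ (m+1) = F (ζ m) + σ • ξ m`, deviations `e m = ζ m - z m`, and `F`
`ρ`-Lipschitz (with `0 ≤ ρ < 1`) on the `r`-tube around the deterministic
path — for every `m = 1, …, M` the in-tube second moment of the deviation
(the integral of `‖e m‖²` over the event `{τ_r > m} = {‖e 1‖ ≤ r, …, ‖e m‖ ≤ r}`)
satisfies
`E[‖e m‖² 1_{τ_r > m}] ≤ σ²ν² ∑_{j=0}^{m-1} ρ^{2j} ≤ σ²ν² / (1 - ρ²)`. -/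
theorem tube_stability
    {Ω : Type*} [MeasureSpace Ω] [IsProbabilityMeasure (ℙ : Measure Ω)]
    {d : ℕ} {M : ℕ} (hM : 1 ≤ M)
    (ξ : ℕ → Ω → EuclideanSpace ℝ (Fin d))
    (hξmeas : ∀ m, Measurable (ξ m))
    (hξindep : iIndepFun (fun m : Fin M => ξ (m : ℕ)) ℙ)
    (hξint : ∀ m, m < M → Integrable (ξ m) ℙ)
    (hξsq : ∀ m, m < M → Integrable (fun ω => ‖ξ m ω‖ ^ 2) ℙ)
    (hξmean : ∀ m, m < M → ∫ ω, ξ m ω = 0)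
    {ν : ℝ} (hν : 0 ≤ ν)
    (hξmom : ∀ m, m < M → ∫ ω, ‖ξ m ω‖ ^ 2 ≤ ν ^ 2)
    {σ : ℝ} (hσ : 0 ≤ σ)
    (F : EuclideanSpace ℝ (Fin d) → EuclideanSpace ℝ (Fin d))
    (hF : Measurable F)
    (z : ℕ → EuclideanSpace ℝ (Fin d))
    (hz : ∀ m, 1 ≤ m → m < M → z (m + 1) = F (z m))
    (ζ : ℕ → Ω → EuclideanSpace ℝ (Fin d))
    (hζ1 : ∀ ω, ζ 1 ω = z 1 + σ • ξ 0 ω)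
    (hζ : ∀ m, 1 ≤ m → m < M → ∀ ω, ζ (m + 1) ω = F (ζ m ω) + σ • ξ m ω)
    {r : ℝ} (hr : 0 < r)
    {ρ : ℝ} (hρ0 : 0 ≤ ρ) (hρ1 : ρ < 1)
    (hLip : ∀ a ∈ ⋃ m ∈ Set.Icc 1 M, Metric.closedBall (z m) r,
            ∀ b ∈ ⋃ m ∈ Set.Icc 1 M, Metric.closedBall (z m) r,
            ‖F a - F b‖ ≤ ρ * ‖a - b‖) :
    ∀ m, 1 ≤ m → m ≤ M →
      (∫ ω in {ω | ∀ k, 1 ≤ k → k ≤ m → ‖ζ k ω - z k‖ ≤ r}, ‖ζ m ω - z m‖ ^ 2)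
          ≤ σ ^ 2 * ν ^ 2 * ∑ j ∈ Finset.range m, ρ ^ (2 * j)
        ∧ σ ^ 2 * ν ^ 2 * ∑ j ∈ Finset.range m, ρ ^ (2 * j)
          ≤ σ ^ 2 * ν ^ 2 / (1 - ρ ^ 2) := by
  classical
  have hTmeas : Measurable (fun ω => (fun i : ℕ => ξ i ω)) := measurable_pi_lambda _ hξmeas
  have hζeq : ∀ k, 1 ≤ k → k ≤ M → ∀ ω, ζ k ω = tubeTraj F (z 1) σ (fun i => ξ i ω) k := by
    intro k hk
    induction k, hk using Nat.le_induction with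
    | base => intro _ ω; rw [hζ1 ω]; simp [tubeTraj]
    | succ n hn ih =>
      intro hnM ω
      have hn' : n < M := by omega
      rw [hζ n hn hn' ω, ih (by omega) ω]
      rcases n with _ | k
      · omega
      · simp [tubeTraj]
  have hζmeas : ∀ k, 1 ≤ k → k ≤ M → Measurable (ζ k) := by
    intro k h1 h2
    have hfe : ζ k = fun ω => tubeTraj F (z 1) σ (fun i => ξ i ω) k :=
      funext fun ω => hζeq k h1 h2 ω
    rw [hfe]
    exact (tubeTraj_measurable hF (z 1) σ k).comp hTmeas
  have hAmeas : ∀ n, n ≤ M →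
      MeasurableSet {ω : Ω | ∀ k, 1 ≤ k → k ≤ n → ‖ζ k ω - z k‖ ≤ r} := by
    intro n hn
    have hset : {ω : Ω | ∀ k, 1 ≤ k → k ≤ n → ‖ζ k ω - z k‖ ≤ r}
        = ⋂ k ∈ Set.Icc 1 n, {ω : Ω | ‖ζ k ω - z k‖ ≤ r} := by
      ext ω
      simp only [Set.mem_setOf_eq, Set.mem_iInter, Set.mem_Icc]
      exact ⟨fun h k hk => h k hk.1 hk.2, fun h k h1 h2 => h k ⟨h1, h2⟩⟩
    rw [hset]
    refine Set.Finite.measurableSet_biInter (Set.finite_Icc _ _) fun k hk => ?_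
    rw [Set.mem_Icc] at hk
    exact measurableSet_le
      (((hζmeas k hk.1 (hk.2.trans hn)).sub measurable_const).norm) measurable_const
  have key : ∀ n, 1 ≤ n → n ≤ M →
      (∫ ω in {ω : Ω | ∀ k, 1 ≤ k → k ≤ n → ‖ζ k ω - z k‖ ≤ r}, ‖ζ n ω - z n‖ ^ 2)
        ≤ σ ^ 2 * ν ^ 2 * ∑ j ∈ Finset.range n, ρ ^ (2 * j) := by
    intro n hn
    induction n, hn using Nat.le_induction with
    | base =>
      intro _
      have heq : (fun ω => ‖ζ 1 ω - z 1‖ ^ 2) = fun ω => σ ^ 2 * ‖ξ 0 ω‖ ^ 2 := by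
        funext ω
        rw [hζ1 ω, add_sub_cancel_left, norm_smul, mul_pow, Real.norm_eq_abs, sq_abs]
      have hint1 : Integrable (fun ω => ‖ζ 1 ω - z 1‖ ^ 2) := by
        rw [heq]; exact (hξsq 0 (by omega)).const_mul _
      calc (∫ ω in {ω : Ω | ∀ k, 1 ≤ k → k ≤ 1 → ‖ζ k ω - z k‖ ≤ r}, ‖ζ 1 ω - z 1‖ ^ 2)
          ≤ ∫ ω, ‖ζ 1 ω - z 1‖ ^ 2 :=
            setIntegral_le_integral hint1 (ae_of_all _ fun ω => by positivity)
        _ = σ ^ 2 * ∫ ω, ‖ξ 0 ω‖ ^ 2 := by rw [heq, integral_const_mul]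
        _ ≤ σ ^ 2 * ν ^ 2 :=
            mul_le_mul_of_nonneg_left (hξmom 0 (by omega)) (sq_nonneg σ)
        _ = σ ^ 2 * ν ^ 2 * ∑ j ∈ Finset.range 1, ρ ^ (2 * j) := by simp
    | succ m hm1 ih =>
      intro hsM
      have hmM' : m < M := by omega
      have hmM : m ≤ M := hmM'.le
      have ihm := ih hmM
      have hζmm : Measurable (ζ m) := hζmeas m hm1 hmM
      set A : Set Ω := {ω : Ω | ∀ k, 1 ≤ k → k ≤ m → ‖ζ k ω - z k‖ ≤ r} with hAdef
      have hAm : MeasurableSet A := hAmeas m hmM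
      have hAm1 : MeasurableSet {ω : Ω | ∀ k, 1 ≤ k → k ≤ m + 1 → ‖ζ k ω - z k‖ ≤ r} :=
        hAmeas (m+1) hsM
      set Y : Ω → EuclideanSpace ℝ (Fin d) := fun ω => F (ζ m ω) - F (z m) with hYdef
      set X : Ω → EuclideanSpace ℝ (Fin d) := A.indicator Y with hXdef
      have hYmeas : Measurable Y := (hF.comp hζmm).sub measurable_const
      have hXmeas : Measurable X := hYmeas.indicator hAm
      have hρr : (0:ℝ) ≤ ρ * r := mul_nonneg hρ0 hr.le
      have hem : ∀ ω ∈ A, ‖ζ m ω - z m‖ ≤ r := fun ω hω => hω m hm1 le_rfl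
      have hYb : ∀ ω ∈ A, ‖Y ω‖ ≤ ρ * ‖ζ m ω - z m‖ := by
        intro ω hω
        have hmem : ∀ p : EuclideanSpace ℝ (Fin d), ‖p - z m‖ ≤ r →
            p ∈ ⋃ k ∈ Set.Icc 1 M, Metric.closedBall (z k) r := by
          intro p hp
          exact Set.mem_biUnion (Set.mem_Icc.2 ⟨hm1, hmM⟩)
            (by simpa [Metric.mem_closedBall, dist_eq_norm] using hp)
        exact hLip _ (hmem _ (hem ω hω)) _ (hmem _ (by simpa using hr.le))
      have hYb' : ∀ ω ∈ A, ‖Y ω‖ ≤ ρ * r := fun ω hω =>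
        (hYb ω hω).trans (mul_le_mul_of_nonneg_left (hem ω hω) hρ0)
      have hXb : ∀ ω, ‖X ω‖ ≤ ρ * r := by
        intro ω
        by_cases hω : ω ∈ A
        · rw [hXdef, Set.indicator_of_mem hω]; exact hYb' ω hω
        · rw [hXdef, Set.indicator_of_notMem hω]; simpa using hρr
      -- dominating function
      set h : Ω → ℝ := fun ω => ‖X ω + σ • ξ m ω‖ ^ 2 with hhdef
      have hhmeas : Measurable h :=
        ((hXmeas.add ((hξmeas m).const_smul σ)).norm).pow_const 2
      have hhint : Integrable h := by
        have hg : Integrable (fun ω => 2 * (ρ*r)^2 + 2 * σ^2 * ‖ξ m ω‖^2) :=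
          (integrable_const _).add ((hξsq m hmM').const_mul _)
        refine hg.mono' hhmeas.aestronglyMeasurable (ae_of_all _ fun ω => ?_)
        have h1 : ‖X ω + σ • ξ m ω‖ ≤ ρ * r + σ * ‖ξ m ω‖ := by
          refine (norm_add_le _ _).trans (add_le_add (hXb ω) ?_)
          rw [norm_smul, Real.norm_eq_abs, abs_of_nonneg hσ]
        have h3 : ‖X ω + σ • ξ m ω‖ ^ 2 ≤ (ρ * r + σ * ‖ξ m ω‖) ^ 2 :=
          pow_le_pow_left₀ (norm_nonneg _) h1 2
        have h2 : ‖h ω‖ = ‖X ω + σ • ξ m ω‖ ^ 2 := by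
          simp only [hhdef]; exact Real.norm_of_nonneg (by positivity)
        rw [h2]
        nlinarith [h3, sq_nonneg (ρ * r - σ * ‖ξ m ω‖)]
      -- Step A : reduce to a full-space integral
      have stepA : (∫ ω in {ω : Ω | ∀ k, 1 ≤ k → k ≤ m + 1 → ‖ζ k ω - z k‖ ≤ r},
          ‖ζ (m+1) ω - z (m+1)‖ ^ 2) ≤ ∫ ω, h ω := by
        have heqn : ∀ ω ∈ {ω : Ω | ∀ k, 1 ≤ k → k ≤ m + 1 → ‖ζ k ω - z k‖ ≤ r},
            ‖ζ (m+1) ω - z (m+1)‖ ^ 2 = h ω := by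
          intro ω hω
          have hωm : ω ∈ A := fun k h1 h2 => hω k h1 (h2.trans (Nat.le_succ m))
          have hvec : ζ (m+1) ω - z (m+1) = X ω + σ • ξ m ω := by
            rw [hζ m hm1 hmM' ω, hz m hm1 hmM', hXdef, Set.indicator_of_mem hωm, hYdef]
            exact add_sub_right_comm _ _ _
          simp only [hhdef]
          rw [hvec]
        calc (∫ ω in {ω : Ω | ∀ k, 1 ≤ k → k ≤ m + 1 → ‖ζ k ω - z k‖ ≤ r},
              ‖ζ (m+1) ω - z (m+1)‖ ^ 2)
            = ∫ ω in {ω : Ω | ∀ k, 1 ≤ k → k ≤ m + 1 → ‖ζ k ω - z k‖ ≤ r}, h ω :=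
              setIntegral_congr_fun hAm1 heqn
          _ ≤ ∫ ω, h ω := setIntegral_le_integral hhint (ae_of_all _ fun ω => by
              simp only [hhdef]; positivity)
      -- integrability of the three pieces
      have hIX : Integrable (fun ω => ‖X ω‖ ^ 2) := by
        refine (integrable_const ((ρ*r)^2)).mono'
          ((hXmeas.norm).pow_const 2).aestronglyMeasurable (ae_of_all _ fun ω => ?_)
        rw [Real.norm_of_nonneg (by positivity)]
        exact pow_le_pow_left₀ (norm_nonneg _) (hXb ω) 2
      have hinner_meas : Measurable (fun ω => (inner ℝ (X ω) (ξ m ω) : ℝ)) :=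
        hXmeas.inner (hξmeas m)
      have hIinner : Integrable (fun ω => (inner ℝ (X ω) (ξ m ω) : ℝ)) := by
        refine ((hξint m hmM').norm.const_mul (ρ*r)).mono'
          hinner_meas.aestronglyMeasurable (ae_of_all _ fun ω => ?_)
        rw [Real.norm_eq_abs]
        exact (abs_real_inner_le_norm _ _).trans
          (mul_le_mul_of_nonneg_right (hXb ω) (norm_nonneg _))
      have hIξ2 : Integrable (fun ω => ‖ξ m ω‖ ^ 2) := hξsq m hmM'
      -- expansion
      have hexp : ∫ ω, h ω = (∫ ω, ‖X ω‖ ^ 2)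
          + (2*σ) * (∫ ω, (inner ℝ (X ω) (ξ m ω) : ℝ)) + σ ^ 2 * (∫ ω, ‖ξ m ω‖ ^ 2) := by
        have heqh : ∀ ω, h ω = ‖X ω‖ ^ 2 + (2*σ) * (inner ℝ (X ω) (ξ m ω) : ℝ)
            + σ ^ 2 * ‖ξ m ω‖ ^ 2 := by
          intro ω
          simp only [hhdef]
          rw [norm_add_sq_real, real_inner_smul_right, norm_smul, Real.norm_eq_abs,
            mul_pow, sq_abs]
          ring
        calc ∫ ω, h ω
            = ∫ ω, (‖X ω‖ ^ 2 + (2*σ) * (inner ℝ (X ω) (ξ m ω) : ℝ)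
              + σ ^ 2 * ‖ξ m ω‖ ^ 2) := integral_congr_ae (ae_of_all _ heqh)
          _ = (∫ ω, (‖X ω‖ ^ 2 + (2*σ) * (inner ℝ (X ω) (ξ m ω) : ℝ)))
              + ∫ ω, σ ^ 2 * ‖ξ m ω‖ ^ 2 :=
              integral_add (hIX.add (hIinner.const_mul (2*σ))) (hIξ2.const_mul (σ^2))
          _ = (∫ ω, ‖X ω‖ ^ 2) + (∫ ω, (2*σ) * (inner ℝ (X ω) (ξ m ω) : ℝ))
              + ∫ ω, σ ^ 2 * ‖ξ m ω‖ ^ 2 := by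
              rw [integral_add hIX (hIinner.const_mul (2*σ))]
          _ = (∫ ω, ‖X ω‖ ^ 2) + (2*σ) * (∫ ω, (inner ℝ (X ω) (ξ m ω) : ℝ))
              + σ ^ 2 * (∫ ω, ‖ξ m ω‖ ^ 2) := by
              rw [integral_const_mul, integral_const_mul]
      -- cross term vanishes
      have hcross : (∫ ω, (inner ℝ (X ω) (ξ m ω) : ℝ)) = 0 := by
        -- independence of X and ξ m
        set S : Finset (Fin M) := Finset.univ.filter (fun i => (i:ℕ) < m) with hS
        have hmemS : ∀ j : Fin m, (⟨(j:ℕ), lt_trans j.2 hmM'⟩ : Fin M) ∈ S := fun j =>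
          Finset.mem_filter.2 ⟨Finset.mem_univ _, j.2⟩
        set i0 : Fin M := ⟨m, hmM'⟩ with hi0
        have hdisj : Disjoint S {i0} := by
          rw [Finset.disjoint_singleton_right, hS]
          simp [hi0]
        have hbig := hξindep.indepFun_finset S {i0} hdisj (fun i => hξmeas i)
        set reindex : (∀ i : S, EuclideanSpace ℝ (Fin d)) → (Fin m → EuclideanSpace ℝ (Fin d)) :=
          fun v j => v ⟨⟨(j:ℕ), lt_trans j.2 hmM'⟩, hmemS j⟩ with hreidx
        have hreindex_meas : Measurable reindex :=
          measurable_pi_lambda _ fun j => measurable_pi_apply _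
        set ext : (Fin m → EuclideanSpace ℝ (Fin d)) → (ℕ → EuclideanSpace ℝ (Fin d)) :=
          fun v i => if hi : i < m then v ⟨i, hi⟩ else 0 with hext
        have hext_meas : Measurable ext := by
          refine measurable_pi_lambda _ fun i => ?_
          by_cases hi : i < m
          · simpa [hext, hi] using measurable_pi_apply (⟨i, hi⟩ : Fin m)
          · simpa [hext, hi] using (measurable_const :
              Measurable (fun _ : Fin m → EuclideanSpace ℝ (Fin d) =>
                (0 : EuclideanSpace ℝ (Fin d))))
        set B : Set (Fin m → EuclideanSpace ℝ (Fin d)) :=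
          {v | ∀ k, 1 ≤ k → k ≤ m → ‖tubeTraj F (z 1) σ (ext v) k - z k‖ ≤ r} with hB
        have hBmeas : MeasurableSet B := by
          have hset : B = ⋂ k ∈ Set.Icc 1 m,
              {v : Fin m → EuclideanSpace ℝ (Fin d) |
                ‖tubeTraj F (z 1) σ (ext v) k - z k‖ ≤ r} := by
            ext v
            simp only [hB, Set.mem_setOf_eq, Set.mem_iInter, Set.mem_Icc]
            exact ⟨fun h' k hk => h' k hk.1 hk.2, fun h' k h1 h2 => h' k ⟨h1, h2⟩⟩
          rw [hset]
          refine Set.Finite.measurableSet_biInter (Set.finite_Icc _ _) fun k _ => ?_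
          exact measurableSet_le
            ((((tubeTraj_measurable hF (z 1) σ k).comp hext_meas).sub
              measurable_const).norm) measurable_const
        set ψ : (Fin m → EuclideanSpace ℝ (Fin d)) → EuclideanSpace ℝ (Fin d) :=
          B.indicator (fun v => F (tubeTraj F (z 1) σ (ext v) m) - F (z m)) with hψ
        have hψmeas : Measurable ψ :=
          ((hF.comp ((tubeTraj_measurable hF (z 1) σ m).comp hext_meas)).sub
            measurable_const).indicator hBmeas
        have hXcomp : X = fun ω => ψ (reindex (fun i : S => ξ i ω)) := by
          funext ω
          have hkey : ∀ k, 1 ≤ k → k ≤ m →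
              tubeTraj F (z 1) σ (ext (reindex (fun i : S => ξ (i : ℕ) ω))) k = ζ k ω := by
            intro k h1 h2
            have hagree : tubeTraj F (z 1) σ (ext (reindex (fun i : S => ξ (i : ℕ) ω))) k
                = tubeTraj F (z 1) σ (fun i => ξ i ω) k := by
              refine tubeTraj_congr F (z 1) σ k _ _ fun i hi => ?_
              have him : i < m := lt_of_lt_of_le hi h2
              simp [hext, hreidx, him]
            rw [hagree, ← hζeq k h1 (h2.trans hmM) ω]
          have hmemiff : reindex (fun i : S => ξ (i : ℕ) ω) ∈ B ↔ ω ∈ A := by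
            constructor
            · intro hv k h1 h2
              have := hv k h1 h2
              rwa [hkey k h1 h2] at this
            · intro hω k h1 h2
              rw [hkey k h1 h2]
              exact hω k h1 h2
          by_cases hω : ω ∈ A
          · rw [hXdef, Set.indicator_of_mem hω, hψ,
              Set.indicator_of_mem (hmemiff.2 hω), hkey m hm1 le_rfl, hYdef]
          · rw [hXdef, Set.indicator_of_notMem hω, hψ,
              Set.indicator_of_notMem (fun hv => hω (hmemiff.1 hv))]
        have hIndep : IndepFun X (ξ m) ℙ := by
          have h1 := hbig.comp (φ := fun w => ψ (reindex w))
            (ψ := fun w : (∀ i : ({i0} : Finset (Fin M)), EuclideanSpace ℝ (Fin d)) =>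
              w ⟨i0, Finset.mem_singleton_self i0⟩)
            (hψmeas.comp hreindex_meas)
            (measurable_pi_apply (X := fun _ : ({i0} : Finset (Fin M)) => EuclideanSpace ℝ (Fin d)) _)
          rw [hXcomp]
          exact h1
        have hproj : ∀ i : Fin d, Measurable (fun x : EuclideanSpace ℝ (Fin d) => x i) :=
          fun i => (EuclideanSpace.proj (𝕜 := ℝ) i).continuous.measurable
        have hXi_int : ∀ i : Fin d, Integrable (fun ω => X ω i) := by
          intro i
          refine (integrable_const (ρ*r)).mono'
            ((hproj i).comp hXmeas).aestronglyMeasurable (ae_of_all _ fun ω => ?_)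
          rw [Real.norm_eq_abs]
          exact (euclid_coord_abs_le_norm (X ω) i).trans (hXb ω)
        have hξi_int : ∀ i : Fin d, Integrable (fun ω => ξ m ω i) := fun i =>
          (EuclideanSpace.proj (𝕜 := ℝ) i).integrable_comp (hξint m hmM')
        have hprod_int : ∀ i : Fin d, Integrable (fun ω => X ω i * ξ m ω i) := by
          intro i
          refine (hξi_int i).bdd_mul ((hproj i).comp hXmeas).aestronglyMeasurable
            (c := ρ*r) (ae_of_all _ fun ω => ?_)
          rw [Real.norm_eq_abs]
          exact (euclid_coord_abs_le_norm (X ω) i).trans (hXb ω)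
        have hcoord : ∀ i : Fin d, (∫ ω, X ω i * ξ m ω i) = 0 := by
          intro i
          have hI : IndepFun (fun ω => X ω i) (fun ω => ξ m ω i) ℙ :=
            hIndep.comp (hproj i) (hproj i)
          have hz0 : (∫ ω, ξ m ω i) = 0 := by
            have h0 := (EuclideanSpace.proj (𝕜 := ℝ) i).integral_comp_comm (hξint m hmM')
            rw [hξmean m hmM'] at h0
            simpa using h0
          calc (∫ ω, X ω i * ξ m ω i)
              = (∫ ω, X ω i) * ∫ ω, ξ m ω i :=
                hI.integral_fun_mul_eq_mul_integral (hXi_int i).aestronglyMeasurable (hξi_int i).aestronglyMeasurable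
            _ = 0 := by rw [hz0, mul_zero]
        calc (∫ ω, (inner ℝ (X ω) (ξ m ω) : ℝ))
            = ∫ ω, ∑ i : Fin d, X ω i * ξ m ω i := by
              refine integral_congr_ae (ae_of_all _ fun ω => ?_)
              simp [PiLp.inner_apply, RCLike.inner_apply, conj_trivial, mul_comm]
          _ = ∑ i : Fin d, ∫ ω, X ω i * ξ m ω i :=
              integral_finset_sum _ fun i _ => hprod_int i
          _ = 0 := Finset.sum_eq_zero fun i _ => hcoord i
      -- bound the ‖X‖² term
      have hXsq : (∫ ω, ‖X ω‖ ^ 2) ≤ ρ ^ 2 * (σ ^ 2 * ν ^ 2 * ∑ j ∈ Finset.range m, ρ ^ (2*j)) := by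
        have hXind : (fun ω => ‖X ω‖ ^ 2) = A.indicator (fun ω => ‖Y ω‖ ^ 2) := by
          funext ω
          by_cases hω : ω ∈ A <;>
            simp [hXdef, Set.indicator_of_mem, Set.indicator_of_notMem, hω]
        have hIOn1 : IntegrableOn (fun ω => ‖Y ω‖ ^ 2) A := by
          refine (integrable_const ((ρ*r)^2)).mono'
            ((hYmeas.norm).pow_const 2).aestronglyMeasurable ?_
          refine (ae_restrict_iff' hAm).2 (ae_of_all _ fun ω hω => ?_)
          rw [Real.norm_of_nonneg (by positivity)]
          exact pow_le_pow_left₀ (norm_nonneg _) (hYb' ω hω) 2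
        have hIOn2 : IntegrableOn (fun ω => ρ ^ 2 * ‖ζ m ω - z m‖ ^ 2) A := by
          refine (integrable_const (ρ^2 * r^2)).mono'
            (((((hζmm.sub measurable_const).norm).pow_const 2).const_mul
              (ρ^2)).aestronglyMeasurable) ?_
          refine (ae_restrict_iff' hAm).2 (ae_of_all _ fun ω hω => ?_)
          rw [Real.norm_of_nonneg (by positivity)]
          have h2 : ‖ζ m ω - z m‖ ^ 2 ≤ r ^ 2 :=
            pow_le_pow_left₀ (norm_nonneg _) (hem ω hω) 2
          exact mul_le_mul_of_nonneg_left h2 (sq_nonneg ρ)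
        calc (∫ ω, ‖X ω‖ ^ 2) = ∫ ω in A, ‖Y ω‖ ^ 2 := by
              rw [hXind, integral_indicator hAm]
          _ ≤ ∫ ω in A, ρ ^ 2 * ‖ζ m ω - z m‖ ^ 2 := by
              refine setIntegral_mono_on hIOn1 hIOn2 hAm fun ω hω => ?_
              have h1 := pow_le_pow_left₀ (norm_nonneg _) (hYb ω hω) 2
              simpa [mul_pow] using h1
          _ = ρ ^ 2 * ∫ ω in A, ‖ζ m ω - z m‖ ^ 2 := integral_const_mul _ _
          _ ≤ ρ ^ 2 * (σ ^ 2 * ν ^ 2 * ∑ j ∈ Finset.range m, ρ ^ (2*j)) :=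
              mul_le_mul_of_nonneg_left ihm (sq_nonneg ρ)
      -- conclude
      calc (∫ ω in {ω : Ω | ∀ k, 1 ≤ k → k ≤ m + 1 → ‖ζ k ω - z k‖ ≤ r},
            ‖ζ (m+1) ω - z (m+1)‖ ^ 2)
          ≤ ∫ ω, h ω := stepA
        _ = (∫ ω, ‖X ω‖ ^ 2) + (2*σ) * (∫ ω, (inner ℝ (X ω) (ξ m ω) : ℝ))
            + σ ^ 2 * (∫ ω, ‖ξ m ω‖ ^ 2) := hexp
        _ ≤ ρ ^ 2 * (σ ^ 2 * ν ^ 2 * ∑ j ∈ Finset.range m, ρ ^ (2*j)) + σ ^ 2 * ν ^ 2 := by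
            rw [hcross, mul_zero, add_zero]
            exact add_le_add hXsq (mul_le_mul_of_nonneg_left (hξmom m hmM') (sq_nonneg σ))
        _ = σ ^ 2 * ν ^ 2 * ∑ j ∈ Finset.range (m+1), ρ ^ (2*j) := by
            have hsum : ∑ j ∈ Finset.range (m+1), ρ ^ (2*j)
                = ρ ^ 2 * ∑ j ∈ Finset.range m, ρ ^ (2*j) + 1 := by
              simp only [pow_mul]
              exact geom_sum_succ
            rw [hsum]; ring
  intro m hm1 hmM
  refine ⟨key m hm1 hmM, ?_⟩
  have hgeo := geom_two_sum_le hρ0 hρ1 m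
  calc σ ^ 2 * ν ^ 2 * ∑ j ∈ Finset.range m, ρ ^ (2 * j)
      ≤ σ ^ 2 * ν ^ 2 * (1 / (1 - ρ ^ 2)) :=
        mul_le_mul_of_nonneg_left hgeo (by positivity)
    _ = σ ^ 2 * ν ^ 2 / (1 - ρ ^ 2) := by rw [mul_one_div]
end

section
/- Finite-horizon tube-exit probability (Corollary 1). In the stochastic inner recursion setup, the probability that the stochastic trajectory exits the r-tube within the horizon M satisfies P(τ_r ≤ M) ≤ (M / r²) · σ²ν² / (1 − ρ_r²). -/
open MeasureTheory ProbabilityTheory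

namespace FiniteHorizonAux

/-- Trajectory as a function of the noise sequence: `traj σ F z1 v j` equals `ζ (j+1)`
when `v i = ξ i ω`. -/
noncomputable def traj {d : ℕ} (σ : ℝ)
    (F : EuclideanSpace ℝ (Fin d) → EuclideanSpace ℝ (Fin d))
    (z1 : EuclideanSpace ℝ (Fin d)) (v : ℕ → EuclideanSpace ℝ (Fin d)) :
    ℕ → EuclideanSpace ℝ (Fin d)
  | 0 => z1 + σ • v 0
  | (j+1) => F (traj σ F z1 v j) + σ • v (j+1)

lemma traj_congr {d : ℕ} (σ : ℝ)
    (F : EuclideanSpace ℝ (Fin d) → EuclideanSpace ℝ (Fin d))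
    (z1 : EuclideanSpace ℝ (Fin d)) {v w : ℕ → EuclideanSpace ℝ (Fin d)} (j : ℕ)
    (h : ∀ i ≤ j, v i = w i) : traj σ F z1 v j = traj σ F z1 w j := by
  induction j with
  | zero => simp [traj, h 0 le_rfl]
  | succ j ih =>
      simp [traj, ih (fun i hi => h i (hi.trans (Nat.le_succ j))), h (j+1) le_rfl]

lemma measurable_traj {d : ℕ} (σ : ℝ)
    {F : EuclideanSpace ℝ (Fin d) → EuclideanSpace ℝ (Fin d)} (hF : Measurable F)
    (z1 : EuclideanSpace ℝ (Fin d)) (j : ℕ) :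
    Measurable (fun v : ℕ → EuclideanSpace ℝ (Fin d) => traj σ F z1 v j) := by
  induction j with
  | zero =>
      simp only [traj]
      exact measurable_const.add ((measurable_pi_apply 0).const_smul σ)
  | succ j ih =>
      simp only [traj]
      exact (hF.comp ih).add ((measurable_pi_apply (j+1)).const_smul σ)

end FiniteHorizonAux

open FiniteHorizonAux

/-- **Finite-horizon tube-exit probability (Corollary 1).**
In the stochastic inner recursion setup, the probability that the stochastic
trajectory exits the `r`-tube within the horizon `M` — i.e. the probability of
the event `{τ_r ≤ M} = {∃ k ∈ {1,…,M}, ‖e k‖ > r}` — satisfies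
`P(τ_r ≤ M) ≤ (M / r²) · σ²ν² / (1 - ρ²)`. -/
theorem finite_horizon_tube_exit
    {Ω : Type*} [MeasureSpace Ω] [IsProbabilityMeasure (ℙ : Measure Ω)]
    {d : ℕ} {M : ℕ} (hM : 1 ≤ M)
    (ξ : ℕ → Ω → EuclideanSpace ℝ (Fin d))
    (hξmeas : ∀ m, Measurable (ξ m))
    (hξindep : iIndepFun (fun m : Fin M => ξ (m : ℕ)) ℙ)
    (hξint : ∀ m, m < M → Integrable (ξ m) ℙ)
    (hξsq : ∀ m, m < M → Integrable (fun ω => ‖ξ m ω‖ ^ 2) ℙ)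
    (hξmean : ∀ m, m < M → ∫ ω, ξ m ω = 0)
    {ν : ℝ} (hν : 0 ≤ ν)
    (hξmom : ∀ m, m < M → ∫ ω, ‖ξ m ω‖ ^ 2 ≤ ν ^ 2)
    {σ : ℝ} (hσ : 0 ≤ σ)
    (F : EuclideanSpace ℝ (Fin d) → EuclideanSpace ℝ (Fin d))
    (hF : Measurable F)
    (z : ℕ → EuclideanSpace ℝ (Fin d))
    (hz : ∀ m, 1 ≤ m → m < M → z (m + 1) = F (z m))
    (ζ : ℕ → Ω → EuclideanSpace ℝ (Fin d))
    (hζ1 : ∀ ω, ζ 1 ω = z 1 + σ • ξ 0 ω)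
    (hζ : ∀ m, 1 ≤ m → m < M → ∀ ω, ζ (m + 1) ω = F (ζ m ω) + σ • ξ m ω)
    {r : ℝ} (hr : 0 < r)
    {ρ : ℝ} (hρ0 : 0 ≤ ρ) (hρ1 : ρ < 1)
    (hLip : ∀ a ∈ ⋃ m ∈ Set.Icc 1 M, Metric.closedBall (z m) r,
            ∀ b ∈ ⋃ m ∈ Set.Icc 1 M, Metric.closedBall (z m) r,
            ‖F a - F b‖ ≤ ρ * ‖a - b‖) :
    (ℙ {ω | ∃ k, 1 ≤ k ∧ k ≤ M ∧ r < ‖ζ k ω - z k‖}).toReal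
      ≤ (M / r ^ 2) * (σ ^ 2 * ν ^ 2 / (1 - ρ ^ 2)) := by
  classical
  have hρsq : ρ ^ 2 < 1 := by nlinarith
  have h1ρ : 0 < 1 - ρ ^ 2 := by linarith
  set C : ℝ := σ ^ 2 * ν ^ 2 / (1 - ρ ^ 2) with hC
  -- the stopping region, the stopped drift, and the stopped process
  set G : ℕ → Set Ω := fun m => {ω | ∀ j, 1 ≤ j → j ≤ m → ‖ζ j ω - z j‖ ≤ r} with hGdef
  set A : ℕ → Ω → EuclideanSpace ℝ (Fin d) :=
    fun m => if 1 ≤ m then (G m).indicator (fun ω => F (ζ m ω) - F (z m)) else 0 with hAdef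
  set D : ℕ → Ω → EuclideanSpace ℝ (Fin d) :=
    fun m ω => A (m - 1) ω + σ • ξ (m - 1) ω with hDdef
  -- measurability of ζ
  have hζmeas : ∀ m, 1 ≤ m → m ≤ M → Measurable (ζ m) := by
    intro m hm1
    induction m, hm1 using Nat.le_induction with
    | base =>
        intro _
        have h : ζ 1 = fun ω => z 1 + σ • ξ 0 ω := funext hζ1
        rw [h]
        exact measurable_const.add ((hξmeas 0).const_smul σ)
    | succ m hm ih =>
        intro hmM
        have h : ζ (m+1) = fun ω => F (ζ m ω) + σ • ξ m ω := funext (hζ m hm (by omega))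
        rw [h]
        exact (hF.comp (ih (by omega))).add ((hξmeas m).const_smul σ)
  have hGmeas : ∀ m, m ≤ M → MeasurableSet (G m) := by
    intro m hmM
    have h : G m = ⋂ j ∈ Set.Icc 1 m, {ω | ‖ζ j ω - z j‖ ≤ r} := by
      ext ω
      simp [hGdef, Set.mem_Icc]
    rw [h]
    refine MeasurableSet.biInter (Set.to_countable _) ?_
    intro j hj
    rw [Set.mem_Icc] at hj
    exact measurableSet_le
      (((hζmeas j hj.1 (hj.2.trans hmM)).sub measurable_const).norm) measurable_const
  have hAmeas : ∀ m, m ≤ M → Measurable (A m) := by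
    intro m hmM
    by_cases hm1 : 1 ≤ m
    · have h : A m = (G m).indicator (fun ω => F (ζ m ω) - F (z m)) := by
        simp [hAdef, hm1]
      rw [h]
      exact ((hF.comp (hζmeas m hm1 hmM)).sub measurable_const).indicator (hGmeas m hmM)
    · have h : A m = 0 := by simp [hAdef, hm1]
      rw [h]; exact measurable_const
  -- values of A
  have hAval : ∀ m, 1 ≤ m → ∀ ω, ω ∈ G m → A m ω = F (ζ m ω) - F (z m) := by
    intro m hm ω hω
    simp [hAdef, hm, Set.indicator_of_mem hω]
  have hAzero : ∀ m, ∀ ω, ω ∉ G m → A m ω = 0 := by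
    intro m ω hω
    by_cases hm : 1 ≤ m
    · simp [hAdef, hm, Set.indicator_of_notMem hω]
    · simp [hAdef, hm]
  have hGmem : ∀ m, ∀ ω, ω ∈ G m → ∀ j, 1 ≤ j → j ≤ m → ‖ζ j ω - z j‖ ≤ r := by
    intro m ω hω
    simp only [hGdef, Set.mem_setOf_eq] at hω
    exact hω
  -- Lipschitz bound inside the tube
  have hLipA : ∀ m, 1 ≤ m → m ≤ M → ∀ ω, ω ∈ G m →
      ‖F (ζ m ω) - F (z m)‖ ≤ ρ * ‖ζ m ω - z m‖ := by
    intro m hm1 hmM ω hω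
    have hmem1 : ζ m ω ∈ ⋃ k ∈ Set.Icc 1 M, Metric.closedBall (z k) r := by
      refine Set.mem_biUnion (Set.mem_Icc.mpr ⟨hm1, hmM⟩) ?_
      simpa [Metric.mem_closedBall, dist_eq_norm] using hGmem m ω hω m hm1 le_rfl
    have hmem2 : z m ∈ ⋃ k ∈ Set.Icc 1 M, Metric.closedBall (z k) r :=
      Set.mem_biUnion (Set.mem_Icc.mpr ⟨hm1, hmM⟩) (Metric.mem_closedBall_self hr.le)
    exact hLip _ hmem1 _ hmem2
  have hAboundr : ∀ m, m ≤ M → ∀ ω, ‖A m ω‖ ≤ ρ * r := by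
    intro m hmM ω
    by_cases hm1 : 1 ≤ m
    · by_cases hω : ω ∈ G m
      · rw [hAval m hm1 ω hω]
        refine (hLipA m hm1 hmM ω hω).trans ?_
        exact mul_le_mul_of_nonneg_left (hGmem m ω hω m hm1 le_rfl) hρ0
      · rw [hAzero m ω hω]
        simpa using by positivity
    · have h : A m ω = 0 := by simp [hAdef, hm1]
      rw [h]
      simpa using by positivity
  -- on the event of no early exit, D equals the true error
  have hDeq : ∀ k, 1 ≤ k → k ≤ M → ∀ ω,
      (∀ j, 1 ≤ j → j < k → ‖ζ j ω - z j‖ ≤ r) → D k ω = ζ k ω - z k := by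
    intro k hk1 hkM ω hcond
    match k, hk1 with
    | 1, _ =>
        have hA0 : A 0 ω = 0 := by simp [hAdef]
        have : D 1 ω = σ • ξ 0 ω := by
          simp only [hDdef]
          norm_num [hA0]
        rw [this, hζ1 ω]
        abel
    | (m+2), _ =>
        have hm1 : 1 ≤ m + 1 := by omega
        have hmM : m + 1 < M := by omega
        have hωG : ω ∈ G (m+1) := by
          simp only [hGdef, Set.mem_setOf_eq]
          intro j hj1 hjm
          exact hcond j hj1 (by omega)
        have hDval : D (m+2) ω = A (m+1) ω + σ • ξ (m+1) ω := by
          simp only [hDdef]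
          norm_num
        rw [hDval, hAval (m+1) hm1 ω hωG, hζ (m+1) hm1 hmM ω, hz (m+1) hm1 hmM]
        abel
  -- the bound ‖A m‖ ≤ ρ ‖D m‖
  have hADle : ∀ m, 1 ≤ m → m ≤ M → ∀ ω, ‖A m ω‖ ≤ ρ * ‖D m ω‖ := by
    intro m hm1 hmM ω
    by_cases hω : ω ∈ G m
    · have hDm : D m ω = ζ m ω - z m :=
        hDeq m hm1 hmM ω (fun j hj1 hjm => hGmem m ω hω j hj1 (by omega))
      rw [hAval m hm1 ω hω, hDm]
      exact hLipA m hm1 hmM ω hω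
    · rw [hAzero m ω hω]
      simpa using by positivity
  -- trajectory representation
  have hζtraj : ∀ j, 1 ≤ j → j ≤ M → ∀ ω,
      ζ j ω = traj σ F (z 1) (fun i => ξ i ω) (j - 1) := by
    intro j hj1
    induction j, hj1 using Nat.le_induction with
    | base =>
        intro _ ω
        simpa [traj] using hζ1 ω
    | succ j hj ih =>
        intro hjM ω
        have h2 : j + 1 - 1 = (j - 1) + 1 := by omega
        have hidx : j - 1 + 1 = j := by omega
        rw [hζ j hj (by omega) ω, h2]
        simp only [traj, hidx]
        rw [← ih (by omega) ω]
  -- independence of A m and ξ m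
  have hindep : ∀ m, 1 ≤ m → m < M → IndepFun (A m) (ξ m) ℙ := by
    intro m hm1 hmM
    set i0 : Fin M := ⟨m, hmM⟩ with hi0
    have hdisj : Disjoint (Finset.Iio i0) ({i0} : Finset (Fin M)) := by
      simp [Finset.disjoint_singleton_right]
    have hbase := hξindep.indepFun_finset (Finset.Iio i0) {i0} hdisj (fun i => hξmeas i)
    set ext : (↥(Finset.Iio i0) → EuclideanSpace ℝ (Fin d)) → (ℕ → EuclideanSpace ℝ (Fin d)) :=
      fun w n => if h : n < m then
        w ⟨⟨n, by omega⟩, Finset.mem_Iio.mpr (by exact Fin.mk_lt_mk.mpr h)⟩ else 0 with hext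
    have hext_eval : ∀ ω n, n < m →
        ext (fun i : ↥(Finset.Iio i0) => ξ ((i : Fin M) : ℕ) ω) n = ξ n ω := by
      intro ω n hn
      simp only [hext]
      rw [dif_pos hn]
    have hext_meas : Measurable ext := by
      refine measurable_pi_lambda _ (fun n => ?_)
      by_cases h : n < m
      · simp only [hext, dif_pos h]
        exact measurable_pi_apply _
      · simp only [hext, dif_neg h]
        exact measurable_const
    set Ψ : (ℕ → EuclideanSpace ℝ (Fin d)) → EuclideanSpace ℝ (Fin d) :=
      fun v => Set.indicator
        {v : ℕ → EuclideanSpace ℝ (Fin d) |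
          ∀ j ∈ Set.Icc 1 m, ‖traj σ F (z 1) v (j-1) - z j‖ ≤ r}
        (fun v => F (traj σ F (z 1) v (m-1)) - F (z m)) v with hΨ
    have hΨmeas : Measurable Ψ := by
      have hset : MeasurableSet {v : ℕ → EuclideanSpace ℝ (Fin d) |
          ∀ j ∈ Set.Icc 1 m, ‖traj σ F (z 1) v (j-1) - z j‖ ≤ r} := by
        have h : {v : ℕ → EuclideanSpace ℝ (Fin d) |
            ∀ j ∈ Set.Icc 1 m, ‖traj σ F (z 1) v (j-1) - z j‖ ≤ r}
            = ⋂ j ∈ Set.Icc 1 m, {v : ℕ → EuclideanSpace ℝ (Fin d) |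
                ‖traj σ F (z 1) v (j-1) - z j‖ ≤ r} := by
          ext v; simp
        rw [h]
        refine MeasurableSet.biInter (Set.to_countable _) (fun j _ => ?_)
        exact measurableSet_le
          (((measurable_traj σ hF (z 1) (j-1)).sub measurable_const).norm) measurable_const
      exact ((hF.comp (measurable_traj σ hF (z 1) (m-1))).sub measurable_const).indicator hset
    have hArep : ∀ ω, A m ω
        = Ψ (ext (fun i : ↥(Finset.Iio i0) => ξ ((i : Fin M) : ℕ) ω)) := by
      intro ω
      have htr : ∀ j, 1 ≤ j → j ≤ m →
          traj σ F (z 1) (ext (fun i : ↥(Finset.Iio i0) => ξ ((i : Fin M) : ℕ) ω)) (j-1)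
            = ζ j ω := by
        intro j hj1 hjm
        rw [hζtraj j hj1 (by omega) ω]
        exact traj_congr σ F (z 1) (j-1) (fun i hi => hext_eval ω i (by omega))
      have hcond : (ext (fun i : ↥(Finset.Iio i0) => ξ ((i : Fin M) : ℕ) ω)
          ∈ {v : ℕ → EuclideanSpace ℝ (Fin d) |
              ∀ j ∈ Set.Icc 1 m, ‖traj σ F (z 1) v (j-1) - z j‖ ≤ r}) ↔ ω ∈ G m := by
        simp only [hGdef, Set.mem_setOf_eq, Set.mem_Icc]
        constructor
        · intro h j hj1 hjm
          have := h j ⟨hj1, hjm⟩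
          rwa [htr j hj1 hjm] at this
        · intro h j hj
          rw [htr j hj.1 hj.2]
          exact h j hj.1 hj.2
      by_cases hω : ω ∈ G m
      · rw [hAval m hm1 ω hω]
        simp only [hΨ]
        rw [Set.indicator_of_mem (hcond.mpr hω), htr m hm1 le_rfl]
      · rw [hAzero m ω hω]
        simp only [hΨ]
        rw [Set.indicator_of_notMem (fun hc => hω (hcond.mp hc))]
    have hAeq : A m = fun ω =>
        (Ψ ∘ ext) (fun i : ↥(Finset.Iio i0) => ξ ((i : Fin M) : ℕ) ω) := funext hArep
    have hres := hbase.comp (hΨmeas.comp hext_meas)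
      (measurable_pi_apply (⟨i0, Finset.mem_singleton_self i0⟩ : ↥({i0} : Finset (Fin M))))
    rw [hAeq]
    exact hres
  -- coordinate projections
  have measproj : ∀ i : Fin d, Measurable (fun x : EuclideanSpace ℝ (Fin d) => x i) :=
    fun i => (EuclideanSpace.proj (𝕜 := ℝ) i).continuous.measurable
  have hcompmean : ∀ m, m < M → ∀ i : Fin d, ∫ ω, ξ m ω i = 0 := by
    intro m hm i
    have h := (EuclideanSpace.proj (𝕜 := ℝ) i).integral_comp_comm (hξint m hm)
    rw [hξmean m hm] at h
    simpa using h
  -- the cross term vanishes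
  have hcross : ∀ m, m < M →
      Integrable (fun ω => (inner ℝ (A m ω) (ξ m ω))) ℙ ∧
      ∫ ω, (inner ℝ (A m ω) (ξ m ω)) = 0 := by
    intro m hm
    by_cases hm1 : 1 ≤ m
    · have hAint : Integrable (A m) ℙ := by
        refine ⟨(hAmeas m hm.le).aestronglyMeasurable, ?_⟩
        exact HasFiniteIntegral.of_bounded
          (Filter.Eventually.of_forall (hAboundr m hm.le))
      have hAi : ∀ i : Fin d, Integrable (fun ω => A m ω i) ℙ :=
        fun i => (EuclideanSpace.proj (𝕜 := ℝ) i).integrable_comp hAint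
      have hξi : ∀ i : Fin d, Integrable (fun ω => ξ m ω i) ℙ :=
        fun i => (EuclideanSpace.proj (𝕜 := ℝ) i).integrable_comp (hξint m hm)
      have hindep_i : ∀ i : Fin d,
          IndepFun (fun ω => A m ω i) (fun ω => ξ m ω i) ℙ :=
        fun i => (hindep m hm1 hm).comp (measproj i) (measproj i)
      have hprod : ∀ i : Fin d, Integrable (fun ω => A m ω i * ξ m ω i) ℙ := by
        intro i
        have := (hindep_i i).integrable_mul (hAi i) (hξi i)
        exact this
      have hinner : (fun ω => (inner ℝ (A m ω) (ξ m ω)))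
          = fun ω => ∑ i : Fin d, A m ω i * ξ m ω i := by
        funext ω
        simp [PiLp.inner_apply, RCLike.inner_apply, conj_trivial, mul_comm]
      constructor
      · rw [hinner]
        exact integrable_finset_sum _ (fun i _ => hprod i)
      · rw [hinner, integral_finset_sum _ (fun i _ => hprod i)]
        refine Finset.sum_eq_zero (fun i _ => ?_)
        have h := (hindep_i i).integral_mul_eq_mul_integral (hAi i).1 (hξi i).1
        calc ∫ ω, A m ω i * ξ m ω i
            = (∫ ω, A m ω i) * ∫ ω, ξ m ω i := h
          _ = 0 := by rw [hcompmean m hm i, mul_zero]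
    · have h0 : m = 0 := by omega
      subst h0
      have hA0 : (fun ω => (inner ℝ (A 0 ω) (ξ 0 ω))) = fun _ => 0 := by
        funext ω
        have : A 0 ω = 0 := by simp [hAdef]
        simp [this]
      rw [hA0]
      exact ⟨integrable_const 0, integral_zero _ _⟩
  -- the key one-step identity
  have hDkey : ∀ k, k < M → Integrable (fun ω => ‖D (k+1) ω‖ ^ 2) ℙ ∧
      ∫ ω, ‖D (k+1) ω‖ ^ 2 = (∫ ω, ‖A k ω‖ ^ 2) + σ ^ 2 * ∫ ω, ‖ξ k ω‖ ^ 2 := by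
    intro k hk
    have hexp : (fun ω => ‖D (k+1) ω‖ ^ 2) = fun ω =>
        (‖A k ω‖ ^ 2 + 2 * σ * (inner ℝ (A k ω) (ξ k ω))) + σ ^ 2 * ‖ξ k ω‖ ^ 2 := by
      funext ω
      have hD : D (k+1) ω = A k ω + σ • ξ k ω := by
        simp only [hDdef]
        norm_num
      rw [hD, norm_add_sq_real, real_inner_smul_right, norm_smul, Real.norm_eq_abs,
        mul_pow, sq_abs]
      ring
    have I1 : Integrable (fun ω => ‖A k ω‖ ^ 2) ℙ := by
      refine ⟨((hAmeas k hk.le).norm.pow_const 2).aestronglyMeasurable, ?_⟩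
      refine HasFiniteIntegral.of_bounded (C := (ρ * r) ^ 2)
        (Filter.Eventually.of_forall (fun ω => ?_))
      rw [Real.norm_eq_abs, abs_of_nonneg (by positivity)]
      exact pow_le_pow_left₀ (norm_nonneg _) (hAboundr k hk.le ω) 2
    have I2 : Integrable (fun ω => 2 * σ * (inner ℝ (A k ω) (ξ k ω))) ℙ :=
      (hcross k hk).1.const_mul _
    have I3 : Integrable (fun ω => σ ^ 2 * ‖ξ k ω‖ ^ 2) ℙ := (hξsq k hk).const_mul _
    have I12 : Integrable (fun ω =>
        ‖A k ω‖ ^ 2 + 2 * σ * (inner ℝ (A k ω) (ξ k ω))) ℙ := I1.add I2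
    constructor
    · rw [hexp]
      exact I12.add I3
    · rw [hexp, integral_add I12 I3, integral_add I1 I2,
        integral_const_mul, integral_const_mul, (hcross k hk).2]
      ring
  -- second-moment bound by induction
  have hDbound : ∀ k, 1 ≤ k → k ≤ M →
      Integrable (fun ω => ‖D k ω‖ ^ 2) ℙ ∧ ∫ ω, ‖D k ω‖ ^ 2 ≤ C := by
    intro k hk1
    induction k, hk1 using Nat.le_induction with
    | base =>
        intro _
        have h0 := hDkey 0 (by omega)
        refine ⟨h0.1, ?_⟩
        rw [h0.2]
        have hA0 : ∫ ω, ‖A 0 ω‖ ^ 2 = 0 := by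
          have : (fun ω => ‖A 0 ω‖ ^ 2) = fun _ => 0 := by
            funext ω
            have h : A 0 ω = 0 := by simp [hAdef]
            simp [h]
          rw [this, integral_zero]
        rw [hA0, zero_add]
        have h2 : σ ^ 2 * ∫ ω, ‖ξ 0 ω‖ ^ 2 ≤ σ ^ 2 * ν ^ 2 :=
          mul_le_mul_of_nonneg_left (hξmom 0 (by omega)) (by positivity)
        refine h2.trans ?_
        rw [hC, le_div_iff₀ h1ρ]
        nlinarith [mul_nonneg (sq_nonneg σ) (sq_nonneg ν), sq_nonneg ρ]
    | succ k hk ih =>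
        intro hkM
        obtain ⟨IDk, hIk⟩ := ih (by omega)
        have hkey := hDkey k (by omega)
        refine ⟨hkey.1, ?_⟩
        rw [hkey.2]
        have h1 : ∫ ω, ‖A k ω‖ ^ 2 ≤ ρ ^ 2 * ∫ ω, ‖D k ω‖ ^ 2 := by
          rw [← integral_const_mul]
          refine integral_mono_of_nonneg (Filter.Eventually.of_forall (fun ω => by positivity))
            (IDk.const_mul _) (Filter.Eventually.of_forall (fun ω => ?_))
          have hle : ‖A k ω‖ ≤ ρ * ‖D k ω‖ := hADle k hk (by omega) ω
          calc ‖A k ω‖ ^ 2 ≤ (ρ * ‖D k ω‖) ^ 2 := pow_le_pow_left₀ (norm_nonneg _) hle 2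
            _ = ρ ^ 2 * ‖D k ω‖ ^ 2 := by ring
        have h2 : σ ^ 2 * ∫ ω, ‖ξ k ω‖ ^ 2 ≤ σ ^ 2 * ν ^ 2 :=
          mul_le_mul_of_nonneg_left (hξmom k (by omega)) (by positivity)
        have h3 : ρ ^ 2 * ∫ ω, ‖D k ω‖ ^ 2 ≤ ρ ^ 2 * C :=
          mul_le_mul_of_nonneg_left hIk (by positivity)
        have h4 : ρ ^ 2 * C + σ ^ 2 * ν ^ 2 = C := by
          rw [hC]
          field_simp
          ring
        linarith
  -- Chebyshev
  have hcheb : ∀ k, 1 ≤ k → k ≤ M →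
      (ℙ {ω | r < ‖D k ω‖}).toReal ≤ C / r ^ 2 := by
    intro k hk1 hkM
    obtain ⟨Ik, hIk⟩ := hDbound k hk1 hkM
    have hsub : {ω | r < ‖D k ω‖} ⊆ {ω | r ^ 2 ≤ ‖D k ω‖ ^ 2} := by
      intro ω hω
      simp only [Set.mem_setOf_eq] at *
      nlinarith [norm_nonneg (D k ω)]
    have hms := mul_meas_ge_le_integral_of_nonneg
      (Filter.Eventually.of_forall (fun ω => sq_nonneg ‖D k ω‖)) Ik (r ^ 2)
    have hmono : (ℙ {ω | r < ‖D k ω‖}).toReal ≤ (ℙ {ω | r ^ 2 ≤ ‖D k ω‖ ^ 2}).toReal :=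
      ENNReal.toReal_mono (measure_ne_top _ _) (measure_mono hsub)
    have hr2 : (0:ℝ) < r ^ 2 := by positivity
    calc (ℙ {ω | r < ‖D k ω‖}).toReal
        ≤ (ℙ {ω | r ^ 2 ≤ ‖D k ω‖ ^ 2}).toReal := hmono
      _ ≤ (∫ ω, ‖D k ω‖ ^ 2) / r ^ 2 := by
          rw [le_div_iff₀ hr2]
          simp only [measureReal_def] at hms
          linarith [hms]
      _ ≤ C / r ^ 2 := by gcongr
  -- union bound over the first exit time
  have hsubset : {ω | ∃ k, 1 ≤ k ∧ k ≤ M ∧ r < ‖ζ k ω - z k‖}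
      ⊆ ⋃ k ∈ Finset.Icc 1 M, {ω | r < ‖D k ω‖} := by
    intro ω hω
    have hex : ∃ k, 1 ≤ k ∧ k ≤ M ∧ r < ‖ζ k ω - z k‖ := hω
    obtain ⟨h01, h0M, h0r⟩ := Nat.find_spec hex
    have hmin : ∀ j, 1 ≤ j → j < Nat.find hex → ‖ζ j ω - z j‖ ≤ r := by
      intro j hj1 hj
      by_contra hcon
      exact Nat.find_min hex hj ⟨hj1, by omega, lt_of_not_ge hcon⟩
    have hDk : D (Nat.find hex) ω = ζ (Nat.find hex) ω - z (Nat.find hex) :=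
      hDeq _ h01 h0M ω hmin
    refine Set.mem_iUnion₂.mpr ⟨Nat.find hex, Finset.mem_Icc.mpr ⟨h01, h0M⟩, ?_⟩
    simp only [Set.mem_setOf_eq, hDk]
    exact h0r
  have hCnonneg : 0 ≤ C := by positivity
  calc (ℙ {ω | ∃ k, 1 ≤ k ∧ k ≤ M ∧ r < ‖ζ k ω - z k‖}).toReal
      ≤ (ℙ (⋃ k ∈ Finset.Icc 1 M, {ω | r < ‖D k ω‖})).toReal :=
        ENNReal.toReal_mono (measure_ne_top _ _) (measure_mono hsubset)
    _ ≤ (∑ k ∈ Finset.Icc 1 M, ℙ {ω | r < ‖D k ω‖}).toReal := by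
        refine ENNReal.toReal_mono ?_ (measure_biUnion_finset_le _ _)
        exact (ENNReal.sum_lt_top.mpr (fun a _ => measure_lt_top _ _)).ne
    _ = ∑ k ∈ Finset.Icc 1 M, (ℙ {ω | r < ‖D k ω‖}).toReal :=
        ENNReal.toReal_sum (fun k _ => measure_ne_top _ _)
    _ ≤ ∑ k ∈ Finset.Icc 1 M, C / r ^ 2 :=
        Finset.sum_le_sum (fun k hk =>
          hcheb k (Finset.mem_Icc.mp hk).1 (Finset.mem_Icc.mp hk).2)
    _ = M * (C / r ^ 2) := by
        rw [Finset.sum_const, Nat.card_Icc, nsmul_eq_mul]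
        norm_num
    _ = (M / r ^ 2) * (σ ^ 2 * ν ^ 2 / (1 - ρ ^ 2)) := by
        rw [hC]; ring
end

section
/- Pre-exit second-moment bound. In the stochastic inner recursion setup, define b_m := E[‖e_m‖² · 1_{τ_r > m−1}] for m = 1, ..., M (with 1_{τ_r > 0} := 1). Then for every m = 1, ..., M, b_m ≤ σ²ν² · Σ_{j=0}^{m−1} ρ_r^{2j} ≤ σ²ν² / (1 − ρ_r²). -/
open MeasureTheory ProbabilityTheory


noncomputable def auxPhi {d : ℕ} (σ : ℝ) (F : EuclideanSpace ℝ (Fin d) → EuclideanSpace ℝ (Fin d))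
    (z1 : EuclideanSpace ℝ (Fin d)) : ℕ → (ℕ → EuclideanSpace ℝ (Fin d)) → EuclideanSpace ℝ (Fin d)
  | 0 => fun v => z1 + σ • v 0
  | (k+1) => fun v => F (auxPhi σ F z1 k v) + σ • v (k+1)

lemma auxPhi_measurable {d : ℕ} {σ : ℝ} {F : EuclideanSpace ℝ (Fin d) → EuclideanSpace ℝ (Fin d)}
    (hF : Measurable F) (z1 : EuclideanSpace ℝ (Fin d)) (k : ℕ) :
    Measurable (auxPhi σ F z1 k) := by
  induction k with
  | zero => exact measurable_const.add ((measurable_pi_apply 0).const_smul σ)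
  | succ k ih => exact (hF.comp ih).add ((measurable_pi_apply (k+1)).const_smul σ)

lemma auxPhi_congr {d : ℕ} {σ : ℝ} {F : EuclideanSpace ℝ (Fin d) → EuclideanSpace ℝ (Fin d)}
    {z1 : EuclideanSpace ℝ (Fin d)} {k : ℕ} {v w : ℕ → EuclideanSpace ℝ (Fin d)}
    (h : ∀ i ≤ k, v i = w i) : auxPhi σ F z1 k v = auxPhi σ F z1 k w := by
  induction k with
  | zero => simp [auxPhi, h 0 le_rfl]
  | succ k ih =>
    simp only [auxPhi, ih (fun i hi => h i (hi.trans (Nat.le_succ k))), h (k+1) le_rfl]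

lemma aux_inner_integral_zero {Ω : Type*} [MeasureSpace Ω] [IsProbabilityMeasure (ℙ : Measure Ω)]
    {d : ℕ} {W Y : Ω → EuclideanSpace ℝ (Fin d)} (h : IndepFun W Y ℙ)
    (hW : Integrable W ℙ) (hY : Integrable Y ℙ) (hY0 : ∫ ω, Y ω = 0) :
    ∫ ω, (inner ℝ (W ω) (Y ω) : ℝ) = 0 := by
  have hrw : ∀ ω, (inner ℝ (W ω) (Y ω) : ℝ) = ∑ i : Fin d, W ω i * Y ω i := by
    intro ω
    simp [PiLp.inner_apply, RCLike.inner_apply, conj_trivial, mul_comm]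
  have hWi : ∀ i : Fin d, Integrable (fun ω => W ω i) ℙ := fun i =>
    (EuclideanSpace.proj (𝕜 := ℝ) i).integrable_comp hW
  have hYi : ∀ i : Fin d, Integrable (fun ω => Y ω i) ℙ := fun i =>
    (EuclideanSpace.proj (𝕜 := ℝ) i).integrable_comp hY
  have hind : ∀ i : Fin d, IndepFun (fun ω => W ω i) (fun ω => Y ω i) ℙ := fun i =>
    h.comp (EuclideanSpace.proj (𝕜 := ℝ) i).continuous.measurable
      (EuclideanSpace.proj (𝕜 := ℝ) i).continuous.measurable
  simp only [hrw]
  rw [integral_finset_sum (f := fun i ω => W ω i * Y ω i) _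
    (fun i _ => (hind i).integrable_mul (hWi i) (hYi i))]
  refine Finset.sum_eq_zero fun i _ => ?_
  have h2 : ∫ a, W a i * Y a i = (∫ ω, W ω i) * ∫ ω, Y ω i :=
    (hind i).integral_fun_mul_eq_mul_integral (hWi i).aestronglyMeasurable (hYi i).aestronglyMeasurable
  rw [h2]
  have : ∫ ω, Y ω i = 0 := by
    have := (EuclideanSpace.proj (𝕜 := ℝ) i).integral_comp_comm hY
    simpa [hY0] using this
  simp [this]

lemma aux_indep {Ω : Type*} [MeasureSpace Ω] [IsProbabilityMeasure (ℙ : Measure Ω)]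
    {d M : ℕ} (ξ : ℕ → Ω → EuclideanSpace ℝ (Fin d)) (hξmeas : ∀ m, Measurable (ξ m))
    (hξindep : iIndepFun (fun m : Fin M => ξ (m : ℕ)) ℙ)
    {n : ℕ} (hn : n < M)
    (Φ : (ℕ → EuclideanSpace ℝ (Fin d)) → EuclideanSpace ℝ (Fin d))
    (hΦmeas : Measurable Φ)
    (hΦloc : ∀ v w, (∀ i, i < n → v i = w i) → Φ v = Φ w) :
    IndepFun (fun ω => Φ (fun i => ξ i ω)) (ξ n) ℙ := by
  classical
  set S : Finset (Fin M) := Finset.Iio ⟨n, hn⟩ with hS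
  set T : Finset (Fin M) := {⟨n, hn⟩} with hT
  have hdisj : Disjoint S T := by
    simp [hS, hT, Finset.disjoint_singleton_right]
  have hbase := hξindep.indepFun_finset S T hdisj (fun i => hξmeas i)
  set ext : ({x // x ∈ S} → EuclideanSpace ℝ (Fin d)) → ℕ → EuclideanSpace ℝ (Fin d) :=
    fun g i => if h : i < n then g ⟨⟨i, h.trans hn⟩, by simp [hS, Finset.mem_Iio, Fin.mk_lt_mk, h]⟩
      else 0 with hext
  have hextmeas : Measurable ext := by
    refine measurable_pi_lambda _ fun i => ?_
    by_cases h : i < n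
    · simp only [hext, dif_pos h]; exact measurable_pi_apply _
    · simp only [hext, dif_neg h]; exact measurable_const
  have hcomp1 : (fun ω => Φ (fun i => ξ i ω))
      = (Φ ∘ ext) ∘ (fun ω (i : {x // x ∈ S}) => ξ ((i : Fin M) : ℕ) ω) := by
    funext ω
    simp only [Function.comp_apply]
    exact hΦloc _ _ (fun i hi => by simp [hext, dif_pos hi])
  have hcomp2 : ξ n
      = (fun g : ({x // x ∈ T} → EuclideanSpace ℝ (Fin d)) =>
          g ⟨⟨n, hn⟩, Finset.mem_singleton_self _⟩)
        ∘ (fun ω (i : {x // x ∈ T}) => ξ ((i : Fin M) : ℕ) ω) := rfl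
  rw [hcomp1, hcomp2]
  exact hbase.comp (hΦmeas.comp hextmeas) (measurable_pi_apply _)


/-- **Pre-exit second-moment bound.**
In the stochastic inner recursion setup, define
`b m := E[‖e m‖² 1_{τ_r > m-1}]` for `m = 1, …, M` (with `1_{τ_r > 0} := 1`,
so the event `{τ_r > m-1}` is `{ω | ∀ k, 1 ≤ k → k < m → ‖e k‖ ≤ r}`, which is
all of `Ω` when `m = 1`).  Then for every `m = 1, …, M`,
`b m ≤ σ²ν² ∑_{j=0}^{m-1} ρ^{2j} ≤ σ²ν² / (1 - ρ²)`. -/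
theorem pre_exit_second_moment_bound
    {Ω : Type*} [MeasureSpace Ω] [IsProbabilityMeasure (ℙ : Measure Ω)]
    {d : ℕ} {M : ℕ} (hM : 1 ≤ M)
    (ξ : ℕ → Ω → EuclideanSpace ℝ (Fin d))
    (hξmeas : ∀ m, Measurable (ξ m))
    (hξindep : iIndepFun (fun m : Fin M => ξ (m : ℕ)) ℙ)
    (hξint : ∀ m, m < M → Integrable (ξ m) ℙ)
    (hξsq : ∀ m, m < M → Integrable (fun ω => ‖ξ m ω‖ ^ 2) ℙ)
    (hξmean : ∀ m, m < M → ∫ ω, ξ m ω = 0)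
    {ν : ℝ} (hν : 0 ≤ ν)
    (hξmom : ∀ m, m < M → ∫ ω, ‖ξ m ω‖ ^ 2 ≤ ν ^ 2)
    {σ : ℝ} (hσ : 0 ≤ σ)
    (F : EuclideanSpace ℝ (Fin d) → EuclideanSpace ℝ (Fin d))
    (hF : Measurable F)
    (z : ℕ → EuclideanSpace ℝ (Fin d))
    (hz : ∀ m, 1 ≤ m → m < M → z (m + 1) = F (z m))
    (ζ : ℕ → Ω → EuclideanSpace ℝ (Fin d))
    (hζ1 : ∀ ω, ζ 1 ω = z 1 + σ • ξ 0 ω)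
    (hζ : ∀ m, 1 ≤ m → m < M → ∀ ω, ζ (m + 1) ω = F (ζ m ω) + σ • ξ m ω)
    {r : ℝ} (hr : 0 < r)
    {ρ : ℝ} (hρ0 : 0 ≤ ρ) (hρ1 : ρ < 1)
    (hLip : ∀ a ∈ ⋃ m ∈ Set.Icc 1 M, Metric.closedBall (z m) r,
            ∀ b ∈ ⋃ m ∈ Set.Icc 1 M, Metric.closedBall (z m) r,
            ‖F a - F b‖ ≤ ρ * ‖a - b‖) :
    ∀ m, 1 ≤ m → m ≤ M →
      (∫ ω in {ω | ∀ k, 1 ≤ k → k < m → ‖ζ k ω - z k‖ ≤ r}, ‖ζ m ω - z m‖ ^ 2)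
          ≤ σ ^ 2 * ν ^ 2 * ∑ j ∈ Finset.range m, ρ ^ (2 * j)
        ∧ σ ^ 2 * ν ^ 2 * ∑ j ∈ Finset.range m, ρ ^ (2 * j)
          ≤ σ ^ 2 * ν ^ 2 / (1 - ρ ^ 2) := by
  classical
  intro m hm1 hmM
  -- the trajectory is a measurable function of the noise
  have hζrep : ∀ k, k < M → ∀ ω, ζ (k+1) ω = auxPhi σ F (z 1) k (fun i => ξ i ω) := by
    intro k
    induction k with
    | zero => intro _ ω; simpa [auxPhi] using hζ1 ω
    | succ k ih =>
      intro hk ω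
      have hk' : k < M := by omega
      rw [hζ (k+1) (by omega) hk ω, ih hk' ω]
      simp [auxPhi]
  have hζmeas : ∀ k, 1 ≤ k → k ≤ M → Measurable (ζ k) := by
    intro k hk1 hkM
    obtain ⟨j, rfl⟩ : ∃ j, k = j + 1 := ⟨k - 1, by omega⟩
    have hrepr : ζ (j+1) = fun ω => auxPhi σ F (z 1) j (fun i => ξ i ω) :=
      funext (hζrep j (by omega))
    rw [hrepr]
    exact (auxPhi_measurable hF _ j).comp (measurable_pi_lambda _ fun i => hξmeas i)
  set A : ℕ → Set Ω := fun n => {ω | ∀ k, 1 ≤ k → k < n → ‖ζ k ω - z k‖ ≤ r} with hA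
  have hAmeas : ∀ n, n ≤ M + 1 → MeasurableSet (A n) := by
    intro n hn
    have hAeq : A n = ⋂ k ∈ Finset.Ico 1 n, {ω | ‖ζ k ω - z k‖ ≤ r} := by
      ext ω; simp [hA, Finset.mem_Ico, and_imp]
    rw [hAeq]
    refine MeasurableSet.biInter (Finset.Ico 1 n).countable_toSet fun k hk => ?_
    have hk' : 1 ≤ k ∧ k < n := Finset.mem_Ico.mp hk
    exact measurableSet_le ((hζmeas k hk'.1 (by omega)).sub measurable_const).norm
      measurable_const
  have htube : ∀ k, 1 ≤ k → k ≤ M → ∀ x : EuclideanSpace ℝ (Fin d), ‖x - z k‖ ≤ r →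
      ‖F x - F (z k)‖ ≤ ρ * ‖x - z k‖ := by
    intro k hk1 hkM x hx
    have hmem : ∀ y : EuclideanSpace ℝ (Fin d), ‖y - z k‖ ≤ r →
        y ∈ ⋃ m ∈ Set.Icc 1 M, Metric.closedBall (z m) r := by
      intro y hy
      exact Set.mem_biUnion ⟨hk1, hkM⟩
        (by simpa [Metric.mem_closedBall, dist_eq_norm] using hy)
    exact hLip x (hmem x hx) (z k) (hmem (z k) (by simpa using hr.le))
  -- main induction
  have key : ∀ n, 1 ≤ n → n ≤ M →
      Integrable ((A n).indicator fun ω => ‖ζ n ω - z n‖ ^ 2) ℙ ∧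
      ∫ ω, (A n).indicator (fun ω => ‖ζ n ω - z n‖ ^ 2) ω ≤
        σ ^ 2 * ν ^ 2 * ∑ j ∈ Finset.range n, ρ ^ (2 * j) := by
    intro n hn
    induction n, hn using Nat.le_induction with
    | base =>
      intro _
      have hA1 : A 1 = Set.univ := Set.eq_univ_iff_forall.mpr fun ω k hk1 hk => by omega
      have hnorm : (fun ω => ‖ζ 1 ω - z 1‖ ^ 2) = fun ω => σ ^ 2 * ‖ξ 0 ω‖ ^ 2 := by
        funext ω
        rw [show ζ 1 ω - z 1 = σ • ξ 0 ω by rw [hζ1 ω]; abel, norm_smul]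
        rw [Real.norm_eq_abs, abs_of_nonneg hσ]; ring
      rw [hA1, Set.indicator_univ, hnorm]
      constructor
      · exact (hξsq 0 (by omega)).const_mul _
      · rw [integral_const_mul]
        have := mul_le_mul_of_nonneg_left (hξmom 0 (by omega)) (sq_nonneg σ)
        simpa using this
    | succ n hn ih =>
      intro hsM
      have hmm' : n < M := by omega
      have hnM : n ≤ M := by omega
      obtain ⟨ihInt, ihBound⟩ := ih hnM
      set u : Ω → EuclideanSpace ℝ (Fin d) := fun ω => F (ζ n ω) - F (z n) with hu
      set W : Ω → EuclideanSpace ℝ (Fin d) := (A (n+1)).indicator u with hWdef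
      set Y : Ω → EuclideanSpace ℝ (Fin d) := ξ n with hYdef
      have hsub : A (n+1) ⊆ A n := fun ω h k h1 h2 => h k h1 (by omega)
      have hmemA : ∀ ω ∈ A (n+1), ‖ζ n ω - z n‖ ≤ r := fun ω h => h n hn (by omega)
      have hub : ∀ ω ∈ A (n+1), ‖u ω‖ ≤ ρ * ‖ζ n ω - z n‖ := fun ω h =>
        htube n hn hnM _ (hmemA ω h)
      have he : ∀ ω, ζ (n+1) ω - z (n+1) = u ω + σ • Y ω := by
        intro ω
        rw [hζ n hn hmm' ω, hz n hn hmm', hu, hYdef]; exact (sub_add_eq_add_sub _ _ _).symm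
      have hexp : ∀ ω, (A (n+1)).indicator (fun ω => ‖ζ (n+1) ω - z (n+1)‖ ^ 2) ω
          = (A (n+1)).indicator (fun ω => ‖u ω‖ ^ 2) ω
            + ((2 * σ) * (inner ℝ (W ω) (Y ω) : ℝ)
            + (A (n+1)).indicator (fun ω => σ ^ 2 * ‖Y ω‖ ^ 2) ω) := by
        intro ω
        by_cases hω : ω ∈ A (n+1)
        · simp only [Set.indicator_of_mem hω, hWdef]
          rw [he ω, norm_add_sq_real, real_inner_smul_right, norm_smul,
            Real.norm_eq_abs, abs_of_nonneg hσ]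
          ring
        · simp [Set.indicator_of_notMem hω, hWdef]
      have humeas : Measurable u := (hF.comp (hζmeas n hn hnM)).sub measurable_const
      have hA'meas : MeasurableSet (A (n+1)) := hAmeas (n+1) (by omega)
      have hWmeas : Measurable W := humeas.indicator hA'meas
      have hWbd : ∀ ω, ‖W ω‖ ≤ ρ * r := by
        intro ω
        by_cases hω : ω ∈ A (n+1)
        · rw [hWdef, Set.indicator_of_mem hω]
          exact (hub ω hω).trans (mul_le_mul_of_nonneg_left (hmemA ω hω) hρ0)
        · rw [hWdef, Set.indicator_of_notMem hω]
          simpa using mul_nonneg hρ0 hr.le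
      have hWint : Integrable W ℙ :=
        Integrable.mono' (integrable_const (ρ * r)) hWmeas.aestronglyMeasurable
          (Filter.Eventually.of_forall hWbd)
      have hYint : Integrable Y ℙ := hξint n hmm'
      have hYsq : Integrable (fun ω => ‖Y ω‖ ^ 2) ℙ := hξsq n hmm'
      have hg1int : Integrable ((A (n+1)).indicator fun ω => ‖u ω‖ ^ 2) ℙ := by
        refine Integrable.mono' (integrable_const ((ρ * r) ^ 2))
          ((humeas.norm.pow_const 2).indicator hA'meas).aestronglyMeasurable
          (Filter.Eventually.of_forall fun ω => ?_)
        by_cases hω : ω ∈ A (n+1)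
        · rw [Set.indicator_of_mem hω, Real.norm_eq_abs, abs_of_nonneg (sq_nonneg _)]
          refine pow_le_pow_left₀ (norm_nonneg _) ?_ 2
          exact (hub ω hω).trans (mul_le_mul_of_nonneg_left (hmemA ω hω) hρ0)
        · rw [Set.indicator_of_notMem hω]
          simpa using sq_nonneg (ρ * r)
      have hinner_int : Integrable (fun ω => (inner ℝ (W ω) (Y ω) : ℝ)) ℙ := by
        refine Integrable.mono' (hYint.norm.const_mul (ρ * r))
          (hWmeas.inner (hξmeas n)).aestronglyMeasurable
          (Filter.Eventually.of_forall fun ω => ?_)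
        calc ‖(inner ℝ (W ω) (Y ω) : ℝ)‖ ≤ ‖W ω‖ * ‖Y ω‖ := norm_inner_le_norm _ _
          _ ≤ (ρ * r) * ‖Y ω‖ := by
              exact mul_le_mul_of_nonneg_right (hWbd ω) (norm_nonneg _)
      have hg3int : Integrable ((A (n+1)).indicator fun ω => σ ^ 2 * ‖Y ω‖ ^ 2) ℙ :=
        (hYsq.const_mul (σ ^ 2)).indicator hA'meas
      -- independence of W and Y
      set B : Set (ℕ → EuclideanSpace ℝ (Fin d)) :=
        {v | ∀ k, 1 ≤ k → k < n + 1 → ‖auxPhi σ F (z 1) (k-1) v - z k‖ ≤ r} with hB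
      set Φ : (ℕ → EuclideanSpace ℝ (Fin d)) → EuclideanSpace ℝ (Fin d) :=
        B.indicator (fun v => F (auxPhi σ F (z 1) (n-1) v) - F (z n)) with hΦ
      have hBmeas : MeasurableSet B := by
        have hBeq : B = ⋂ k ∈ Finset.Ico 1 (n+1),
            {v | ‖auxPhi σ F (z 1) (k-1) v - z k‖ ≤ r} := by
          ext v; simp [hB, Finset.mem_Ico, and_imp]
        rw [hBeq]
        exact MeasurableSet.biInter (Finset.Ico 1 (n+1)).countable_toSet fun k _ =>
          measurableSet_le ((auxPhi_measurable hF _ _).sub measurable_const).norm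
            measurable_const
      have hΦmeas : Measurable Φ :=
        ((hF.comp (auxPhi_measurable hF _ _)).sub measurable_const).indicator hBmeas
      have hΦloc : ∀ v w, (∀ i, i < n → v i = w i) → Φ v = Φ w := by
        intro v w hvw
        have hkey : ∀ k, k < n → auxPhi σ F (z 1) k v = auxPhi σ F (z 1) k w :=
          fun k hk => auxPhi_congr fun i hi => hvw i (by omega)
        have hBiff : v ∈ B ↔ w ∈ B := by
          constructor <;> intro h k h1 h2
          · rw [← hkey (k-1) (by omega)]; exact h k h1 h2
          · rw [hkey (k-1) (by omega)]; exact h k h1 h2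
        by_cases hv : v ∈ B
        · rw [hΦ, Set.indicator_of_mem hv, Set.indicator_of_mem (hBiff.mp hv),
            hkey (n-1) (by omega)]
        · rw [hΦ, Set.indicator_of_notMem hv,
            Set.indicator_of_notMem (fun hw => hv (hBiff.mpr hw))]
      have hWrep : W = fun ω => Φ (fun i => ξ i ω) := by
        funext ω
        have hvk : ∀ k, 1 ≤ k → k ≤ n →
            auxPhi σ F (z 1) (k-1) (fun i => ξ i ω) = ζ k ω := by
          intro k h1 h2
          have h := (hζrep (k-1) (by omega) ω).symm
          rwa [Nat.sub_add_cancel h1] at h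
        have hmem : (fun i => ξ i ω) ∈ B ↔ ω ∈ A (n+1) := by
          constructor <;> intro h k h1 h2
          · rw [← hvk k h1 (by omega)]; exact h k h1 h2
          · rw [hvk k h1 (by omega)]; exact h k h1 h2
        by_cases hω : ω ∈ A (n+1)
        · rw [hWdef, Set.indicator_of_mem hω, hΦ, Set.indicator_of_mem (hmem.mpr hω),
            hvk n hn le_rfl, hu]
        · rw [hWdef, Set.indicator_of_notMem hω, hΦ,
            Set.indicator_of_notMem (fun hv => hω (hmem.mp hv))]
      have hindep : IndepFun W Y ℙ := by
        rw [hWrep, hYdef]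
        exact aux_indep ξ hξmeas hξindep hmm' Φ hΦmeas hΦloc
      have hcross : ∫ ω, (inner ℝ (W ω) (Y ω) : ℝ) = 0 :=
        aux_inner_integral_zero hindep hWint hYint (hξmean n hmm')
      have heqfun : (A (n+1)).indicator (fun ω => ‖ζ (n+1) ω - z (n+1)‖ ^ 2)
          = fun ω => (A (n+1)).indicator (fun ω => ‖u ω‖ ^ 2) ω
            + ((2 * σ) * (inner ℝ (W ω) (Y ω) : ℝ)
            + (A (n+1)).indicator (fun ω => σ ^ 2 * ‖Y ω‖ ^ 2) ω) := funext hexp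
      have hg2 : Integrable (fun ω => (2 * σ) * (inner ℝ (W ω) (Y ω) : ℝ)) ℙ :=
        hinner_int.const_mul (2 * σ)
      have hg23 : Integrable (fun ω => (2 * σ) * (inner ℝ (W ω) (Y ω) : ℝ)
          + (A (n+1)).indicator (fun ω => σ ^ 2 * ‖Y ω‖ ^ 2) ω) ℙ := hg2.add hg3int
      constructor
      · rw [heqfun]
        exact hg1int.add hg23
      · rw [heqfun, integral_add hg1int hg23, integral_add hg2 hg3int,
          integral_const_mul, hcross, mul_zero, zero_add]
        have hb1 : ∫ ω, (A (n+1)).indicator (fun ω => ‖u ω‖ ^ 2) ω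
            ≤ ρ ^ 2 * (σ ^ 2 * ν ^ 2 * ∑ j ∈ Finset.range n, ρ ^ (2 * j)) := by
          have hmono : ∀ ω, (A (n+1)).indicator (fun ω => ‖u ω‖ ^ 2) ω
              ≤ ρ ^ 2 * (A n).indicator (fun ω => ‖ζ n ω - z n‖ ^ 2) ω := by
            intro ω
            by_cases hω : ω ∈ A (n+1)
            · rw [Set.indicator_of_mem hω, Set.indicator_of_mem (hsub hω)]
              calc ‖u ω‖ ^ 2 ≤ (ρ * ‖ζ n ω - z n‖) ^ 2 :=
                    pow_le_pow_left₀ (norm_nonneg _) (hub ω hω) 2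
                _ = ρ ^ 2 * ‖ζ n ω - z n‖ ^ 2 := by ring
            · rw [Set.indicator_of_notMem hω]
              exact mul_nonneg (sq_nonneg ρ)
                (Set.indicator_nonneg (fun _ _ => sq_nonneg _) ω)
          calc ∫ ω, (A (n+1)).indicator (fun ω => ‖u ω‖ ^ 2) ω
              ≤ ∫ ω, ρ ^ 2 * (A n).indicator (fun ω => ‖ζ n ω - z n‖ ^ 2) ω :=
                integral_mono hg1int (ihInt.const_mul _) hmono
            _ = ρ ^ 2 * ∫ ω, (A n).indicator (fun ω => ‖ζ n ω - z n‖ ^ 2) ω :=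
                integral_const_mul _ _
            _ ≤ ρ ^ 2 * (σ ^ 2 * ν ^ 2 * ∑ j ∈ Finset.range n, ρ ^ (2 * j)) :=
                mul_le_mul_of_nonneg_left ihBound (sq_nonneg ρ)
        have hb3 : ∫ ω, (A (n+1)).indicator (fun ω => σ ^ 2 * ‖Y ω‖ ^ 2) ω
            ≤ σ ^ 2 * ν ^ 2 := by
          have hmono : ∀ ω, (A (n+1)).indicator (fun ω => σ ^ 2 * ‖Y ω‖ ^ 2) ω
              ≤ σ ^ 2 * ‖Y ω‖ ^ 2 := fun ω =>
            Set.indicator_le_self' (fun ω _ => by positivity) ω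
          calc ∫ ω, (A (n+1)).indicator (fun ω => σ ^ 2 * ‖Y ω‖ ^ 2) ω
              ≤ ∫ ω, σ ^ 2 * ‖Y ω‖ ^ 2 :=
                integral_mono hg3int (hYsq.const_mul _) hmono
            _ = σ ^ 2 * ∫ ω, ‖Y ω‖ ^ 2 := integral_const_mul _ _
            _ ≤ σ ^ 2 * ν ^ 2 :=
                mul_le_mul_of_nonneg_left (hξmom n hmm') (sq_nonneg σ)
        have hsum : σ ^ 2 * ν ^ 2 * ∑ j ∈ Finset.range (n+1), ρ ^ (2 * j)
            = ρ ^ 2 * (σ ^ 2 * ν ^ 2 * ∑ j ∈ Finset.range n, ρ ^ (2 * j))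
              + σ ^ 2 * ν ^ 2 := by
          have hc : ∀ N : ℕ, ∑ j ∈ Finset.range N, ρ ^ (2 * j)
              = ∑ j ∈ Finset.range N, (ρ ^ 2) ^ j :=
            fun N => Finset.sum_congr rfl fun j _ => pow_mul ρ 2 j
          rw [hc, hc, geom_sum_succ]
          ring
        rw [hsum]
        linarith
  obtain ⟨hint, hbound⟩ := key m hm1 hmM
  constructor
  · rw [show {ω | ∀ k, 1 ≤ k → k < m → ‖ζ k ω - z k‖ ≤ r} = A m from rfl,
      ← integral_indicator (hAmeas m (by omega))]
    exact hbound
  · have hρ2 : ρ ^ 2 < 1 := by nlinarith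
    have hpos : 0 < 1 - ρ ^ 2 := by linarith
    have hsum : ∑ j ∈ Finset.range m, ρ ^ (2 * j) ≤ 1 / (1 - ρ ^ 2) := by
      simp_rw [pow_mul]
      rw [geom_sum_eq (by linarith : ρ ^ 2 ≠ 1)]
      rw [show ((ρ ^ 2) ^ m - 1) / (ρ ^ 2 - 1) = (1 - (ρ ^ 2) ^ m) / (1 - ρ ^ 2) by
        rw [div_eq_div_iff (by nlinarith) (by linarith)]; ring]
      rw [div_le_div_iff₀ hpos hpos]
      nlinarith [pow_nonneg (sq_nonneg ρ) m]
    calc σ ^ 2 * ν ^ 2 * ∑ j ∈ Finset.range m, ρ ^ (2 * j)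
        ≤ σ ^ 2 * ν ^ 2 * (1 / (1 - ρ ^ 2)) :=
          mul_le_mul_of_nonneg_left hsum (by positivity)
      _ = σ ^ 2 * ν ^ 2 / (1 - ρ ^ 2) := by ring
end

section
/- Success-mass derivative under tilting. In the exponential tilt setup, let A ∈ 𝒜 and set p(t) := μ_t(A). If 0 < μ_t(A) < 1 for every t ∈ ℝ, then p is differentiable on ℝ and p′(t) = p(t)·(1 − p(t))·Δ(t), where Δ(t) := E_{μ_t}[q | A] − E_{μ_t}[q | A^c] with E_{μ_t}[q | A] := μ_t(A)^{-1} ∫_A q dμ_t and E_{μ_t}[q | A^c] := μ_t(A^c)^{-1} ∫_{A^c} q dμ_t. -/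
open MeasureTheory
open scoped ENNReal NNReal

section Aux

variable {H : Type*} [MeasurableSpace H]

private lemma tilt_integrable_exp (ν : Measure H) [IsFiniteMeasure ν]
    {q : H → ℝ} (hq : Measurable q) {C : ℝ} (hqC : ∀ h, |q h| ≤ C) (s : ℝ) :
    Integrable (fun h => Real.exp (s * q h)) ν := by
  refine Integrable.mono' (integrable_const (Real.exp (|s| * C)))
    ((Real.measurable_exp.comp (hq.const_mul s)).aestronglyMeasurable) ?_
  filter_upwards with h
  rw [Real.norm_eq_abs, abs_of_pos (Real.exp_pos _)]
  refine Real.exp_le_exp.2 ?_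
  calc s * q h ≤ |s * q h| := le_abs_self _
    _ = |s| * |q h| := abs_mul _ _
    _ ≤ |s| * C := by
        exact mul_le_mul_of_nonneg_left (hqC h) (abs_nonneg s)

private lemma tilt_integrable_q_exp (ν : Measure H) [IsFiniteMeasure ν]
    {q : H → ℝ} (hq : Measurable q) {C : ℝ} (hqC : ∀ h, |q h| ≤ C) (s : ℝ) :
    Integrable (fun h => q h * Real.exp (s * q h)) ν := by
  refine Integrable.mono' (integrable_const (C * Real.exp (|s| * C)))
    ((hq.mul (Real.measurable_exp.comp (hq.const_mul s))).aestronglyMeasurable) ?_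
  filter_upwards with h
  rw [Real.norm_eq_abs, abs_mul, abs_of_pos (Real.exp_pos _)]
  refine mul_le_mul (hqC h) (Real.exp_le_exp.2 ?_) (le_of_lt (Real.exp_pos _))
    ((abs_nonneg _).trans (hqC h))
  calc s * q h ≤ |s * q h| := le_abs_self _
    _ = |s| * |q h| := abs_mul _ _
    _ ≤ |s| * C := mul_le_mul_of_nonneg_left (hqC h) (abs_nonneg s)

private lemma tilt_hasDerivAt (ν : Measure H) [IsFiniteMeasure ν]
    {q : H → ℝ} (hq : Measurable q) {C : ℝ} (hqC : ∀ h, |q h| ≤ C) (t : ℝ) :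
    HasDerivAt (fun s => ∫ h, Real.exp (s * q h) ∂ν)
      (∫ h, q h * Real.exp (t * q h) ∂ν) t := by
  have key := hasDerivAt_integral_of_dominated_loc_of_deriv_le (μ := ν)
    (F := fun s h => Real.exp (s * q h))
    (F' := fun s h => q h * Real.exp (s * q h))
    (x₀ := t) (s := Metric.ball t 1) (bound := fun _ => C * Real.exp ((|t| + 1) * C)) (Metric.ball_mem_nhds t one_pos)
    ?_ ?_ ?_ ?_ ?_ ?_
  · exact key.2
  · filter_upwards with s
    exact (Real.measurable_exp.comp (hq.const_mul s)).aestronglyMeasurable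
  · exact tilt_integrable_exp ν hq hqC t
  · exact (hq.mul (Real.measurable_exp.comp (hq.const_mul t))).aestronglyMeasurable
  · filter_upwards with h s hs
    rw [Real.norm_eq_abs, abs_mul, abs_of_pos (Real.exp_pos _)]
    have hC : 0 ≤ C := (abs_nonneg _).trans (hqC h)
    have hsle : |s| ≤ |t| + 1 := by
      have := mem_ball_iff_norm.1 hs
      calc |s| = |t + (s - t)| := by ring_nf
        _ ≤ |t| + |s - t| := abs_add_le _ _
        _ ≤ |t| + 1 := by
            have : |s - t| ≤ 1 := le_of_lt (by simpa [Real.norm_eq_abs] using this)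
            linarith
    refine mul_le_mul (hqC h) (Real.exp_le_exp.2 ?_) (le_of_lt (Real.exp_pos _)) hC
    calc s * q h ≤ |s * q h| := le_abs_self _
      _ = |s| * |q h| := abs_mul _ _
      _ ≤ (|t| + 1) * C := by
          exact mul_le_mul hsle (hqC h) (abs_nonneg _) (by linarith [abs_nonneg t])
  · exact integrable_const _
  · filter_upwards with h s _
    simpa [mul_comm] using (hasDerivAt_mul_const (q h) (x := s)).exp

end Aux

/-- **Success-mass derivative under tilting.**
In the exponential tilt setup (`π` a probability measure, `q` bounded
measurable, `μ t` the tilt of `π` by `e^{t q} / Z t`), let `A` be a measurable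
set and set `p t = μ t A`.  If `0 < μ t A < 1` for every `t`, then `p` is
differentiable on `ℝ` with `p' t = p t (1 - p t) Δ t`, where
`Δ t = E_{μ t}[q | A] - E_{μ t}[q | Aᶜ]`
`     = (μ t A)⁻¹ ∫_A q dμ t - (μ t Aᶜ)⁻¹ ∫_{Aᶜ} q dμ t`. -/
theorem success_mass_derivative
    {H : Type*} [MeasurableSpace H] (π : Measure H) [IsProbabilityMeasure π]
    (q : H → ℝ) (hq : Measurable q) {C : ℝ} (hqC : ∀ h, |q h| ≤ C)
    (μ : ℝ → Measure H)
    (hμ : ∀ t, μ t = π.withDensity fun h =>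
      ENNReal.ofReal (Real.exp (t * q h) / ∫ h', Real.exp (t * q h') ∂π))
    (A : Set H) (hA : MeasurableSet A)
    (hp : ∀ t : ℝ, 0 < ((μ t) A).toReal ∧ ((μ t) A).toReal < 1) :
    ∀ t : ℝ,
      HasDerivAt (fun s => ((μ s) A).toReal)
        (((μ t) A).toReal * (1 - ((μ t) A).toReal)
          * ((((μ t) A).toReal)⁻¹ * (∫ h in A, q h ∂(μ t))
              - (((μ t) Aᶜ).toReal)⁻¹ * ∫ h in Aᶜ, q h ∂(μ t))) t := by
  intro t
  set G : ℝ → ℝ := fun s => ∫ h', Real.exp (s * q h') ∂π with hGdef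
  have hGpos : ∀ s, 0 < G s := fun s =>
    integral_exp_pos (tilt_integrable_exp π hq hqC s)
  -- measure of a measurable set under μ s
  have hmeas : ∀ s (B : Set H), MeasurableSet B →
      ((μ s) B).toReal = (∫ h in B, Real.exp (s * q h) ∂π) / G s := by
    intro s B hB
    rw [hμ s, withDensity_apply _ hB]
    have hint : Integrable (fun h => Real.exp (s * q h) / G s) (π.restrict B) :=
      ((tilt_integrable_exp π hq hqC s).restrict).div_const _
    have hnn : 0 ≤ᵐ[π.restrict B] fun h => Real.exp (s * q h) / G s := by
      filter_upwards with h
      exact div_nonneg (le_of_lt (Real.exp_pos _)) (le_of_lt (hGpos s))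
    rw [← ofReal_integral_eq_lintegral_ofReal hint hnn, ENNReal.toReal_ofReal
      (integral_nonneg fun h => div_nonneg (le_of_lt (Real.exp_pos _)) (le_of_lt (hGpos s)))]
    rw [integral_div]
  -- set integral of q under μ s
  have hqint : ∀ s (B : Set H), MeasurableSet B →
      (∫ h in B, q h ∂(μ s)) = (∫ h in B, q h * Real.exp (s * q h) ∂π) / G s := by
    intro s B hB
    rw [hμ s, restrict_withDensity hB]
    have : (fun h => ENNReal.ofReal (Real.exp (s * q h) / G s))
        = fun h => ((fun h => Real.toNNReal (Real.exp (s * q h) / G s)) h : ℝ≥0∞) := rfl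
    have hfm : Measurable fun h => (Real.exp (s * q h) / G s).toNNReal :=
      ((hq.const_mul s).exp.div_const _).real_toNNReal
    rw [this, integral_withDensity_eq_integral_smul hfm]
    rw [← integral_div]
    congr 1
    funext h
    rw [NNReal.smul_def, Real.coe_toNNReal _
      (div_nonneg (le_of_lt (Real.exp_pos _)) (le_of_lt (hGpos s))), smul_eq_mul]
    ring
  -- notation for the four π-integrals at time t
  set FA : ℝ → ℝ := fun s => ∫ h in A, Real.exp (s * q h) ∂π with hFAdef
  have hFC : ∀ s, (∫ h in Aᶜ, Real.exp (s * q h) ∂π) = G s - FA s := by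
    intro s
    have := integral_add_compl hA (tilt_integrable_exp π hq hqC s)
    simp only [hGdef, hFAdef]
    linarith [this]
  set DA : ℝ := ∫ h in A, q h * Real.exp (t * q h) ∂π with hDAdef
  set DC : ℝ := ∫ h in Aᶜ, q h * Real.exp (t * q h) ∂π with hDCdef
  have hDtot : (∫ h, q h * Real.exp (t * q h) ∂π) = DA + DC :=
    (integral_add_compl hA (tilt_integrable_q_exp π hq hqC t)).symm
  -- p s = FA s / G s
  have hpeq : ∀ s, ((μ s) A).toReal = FA s / G s := fun s => hmeas s A hA
  -- derivative of FA and G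
  have hFA' : HasDerivAt FA DA t := tilt_hasDerivAt (π.restrict A) hq hqC t
  have hG' : HasDerivAt G (DA + DC) t := by
    rw [← hDtot]; exact tilt_hasDerivAt π hq hqC t
  have hdiv : HasDerivAt (fun s => FA s / G s)
      ((DA * G t - FA t * (DA + DC)) / (G t) ^ 2) t :=
    hFA'.div hG' (ne_of_gt (hGpos t))
  have hfun : (fun s => ((μ s) A).toReal) = fun s => FA s / G s := funext hpeq
  rw [hfun, hpeq t, hmeas t Aᶜ hA.compl, hqint t A hA, hqint t Aᶜ hA.compl, hFC t]
  convert hdiv using 1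
  -- numeric identity
  have hFApos : 0 < FA t := by
    have := (hp t).1
    rw [hpeq t] at this
    exact (div_pos_iff.1 this).resolve_right (fun h => absurd h.2 (not_lt.2 (le_of_lt (hGpos t)))) |>.1
  have hFAlt : FA t < G t := by
    have := (hp t).2
    rw [hpeq t, div_lt_one (hGpos t)] at this
    exact this
  have h1 : G t ≠ 0 := ne_of_gt (hGpos t)
  have h2 : FA t ≠ 0 := ne_of_gt hFApos
  have h3 : G t - FA t ≠ 0 := ne_of_gt (by linarith)
  field_simp
  have e : (∫ h in A, q h * Real.exp (q h * t) ∂π) = DA := by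
    rw [hDAdef]; congr 1; funext h; ring_nf
  rw [e]
  ring
end

section
/- Log-odds derivative equals the class-conditional gap. In the exponential tilt setup, let A ∈ 𝒜 and set p(t) := μ_t(A). If 0 < μ_t(A) < 1 for every t ∈ ℝ, then the log-odds t ↦ log(p(t)/(1 − p(t))) is differentiable on ℝ with derivative (d/dt) log(p(t)/(1 − p(t))) = Δ(t), where Δ(t) := E_{μ_t}[q | A] − E_{μ_t}[q | A^c] with E_{μ_t}[q | A] := μ_t(A)^{-1} ∫_A q dμ_t and E_{μ_t}[q | A^c] := μ_t(A^c)^{-1} ∫_{A^c} q dμ_t. -/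
open MeasureTheory
open scoped ENNReal NNReal

section Aux

variable {H : Type*} [MeasurableSpace H] (π : Measure H) [IsProbabilityMeasure π]
  (q : H → ℝ) (hq : Measurable q) {C : ℝ} (hqC : ∀ h, |q h| ≤ C)

include hq hqC

private lemma exp_int (t : ℝ) : Integrable (fun h => Real.exp (t * q h)) π := by
  refine ⟨(hq.const_mul t).exp.aestronglyMeasurable, ?_⟩
  apply HasFiniteIntegral.of_bounded (C := Real.exp (|t| * C))
  filter_upwards with h
  rw [Real.norm_eq_abs, abs_of_pos (Real.exp_pos _)]
  refine Real.exp_le_exp.2 (le_trans (le_abs_self _) ?_)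
  rw [abs_mul]
  exact mul_le_mul_of_nonneg_left (hqC h) (abs_nonneg t)

private lemma qexp_int (t : ℝ) : Integrable (fun h => q h * Real.exp (t * q h)) π := by
  refine ⟨(hq.mul (hq.const_mul t).exp).aestronglyMeasurable, ?_⟩
  apply HasFiniteIntegral.of_bounded (C := C * Real.exp (|t| * C))
  filter_upwards with h
  rw [Real.norm_eq_abs, abs_mul, abs_of_pos (Real.exp_pos _)]
  refine mul_le_mul (hqC h) (Real.exp_le_exp.2 (le_trans (le_abs_self _) ?_))
    (Real.exp_pos _).le ((abs_nonneg _).trans (hqC h))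
  rw [abs_mul]
  exact mul_le_mul_of_nonneg_left (hqC h) (abs_nonneg t)

private lemma deriv_set_exp (B : Set H) (t : ℝ) :
    HasDerivAt (fun s => ∫ h in B, Real.exp (s * q h) ∂π)
      (∫ h in B, q h * Real.exp (t * q h) ∂π) t := by
  have : Nonempty H := MeasureTheory.Measure.nonempty_of_neZero π
  have hC : 0 ≤ C := (abs_nonneg _).trans (hqC (Classical.arbitrary H))
  have := (hasDerivAt_integral_of_dominated_loc_of_deriv_le (μ := π.restrict B)
    (F := fun s h => Real.exp (s * q h)) (F' := fun s h => q h * Real.exp (s * q h))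
    (x₀ := t) (bound := fun _ => C * Real.exp ((|t| + 1) * C)) (Metric.ball_mem_nhds t one_pos)
    (Filter.Eventually.of_forall fun s =>
      ((hq.const_mul s).exp.aestronglyMeasurable))
    ((exp_int π q hq hqC t).restrict)
    ((hq.mul (hq.const_mul t).exp).aestronglyMeasurable)
    ?_ (integrable_const _) ?_).2
  · exact this
  · filter_upwards with h s hs
    rw [Real.norm_eq_abs, abs_mul, abs_of_pos (Real.exp_pos _)]
    have hsle : |s| ≤ |t| + 1 := by
      have := mem_ball_iff_norm.1 hs
      calc |s| ≤ |s - t| + |t| := by simpa using abs_add_le (s - t) t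
        _ ≤ |t| + 1 := by rw [Real.norm_eq_abs] at this; linarith
    refine mul_le_mul (hqC h) (Real.exp_le_exp.2 (le_trans (le_abs_self _) ?_))
      (Real.exp_pos _).le hC
    rw [abs_mul]
    exact mul_le_mul hsle (hqC h) (abs_nonneg _) (by linarith [abs_nonneg t])
  · filter_upwards with h s _
    have := (hasDerivAt_mul_const (x := s) (q h)).exp
    simpa [mul_comm] using this

end Aux

/-- **Log-odds derivative equals the class-conditional gap.**
In the exponential tilt setup (`π` a probability measure, `q` bounded
measurable, `μ t` the tilt of `π` by `e^{t q} / Z t`), let `A` be a measurable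
set and set `p t = μ t A`.  If `0 < μ t A < 1` for every `t`, then the
log-odds `t ↦ log (p t / (1 - p t))` is differentiable on `ℝ` with derivative
`Δ t = E_{μ t}[q | A] - E_{μ t}[q | Aᶜ]`
`    = (μ t A)⁻¹ ∫_A q dμ t - (μ t Aᶜ)⁻¹ ∫_{Aᶜ} q dμ t`. -/
theorem log_odds_derivative
    {H : Type*} [MeasurableSpace H] (π : Measure H) [IsProbabilityMeasure π]
    (q : H → ℝ) (hq : Measurable q) {C : ℝ} (hqC : ∀ h, |q h| ≤ C)
    (μ : ℝ → Measure H)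
    (hμ : ∀ t, μ t = π.withDensity fun h =>
      ENNReal.ofReal (Real.exp (t * q h) / ∫ h', Real.exp (t * q h') ∂π))
    (A : Set H) (hA : MeasurableSet A)
    (hp : ∀ t : ℝ, 0 < ((μ t) A).toReal ∧ ((μ t) A).toReal < 1) :
    ∀ t : ℝ,
      HasDerivAt (fun s => Real.log (((μ s) A).toReal / (1 - ((μ s) A).toReal)))
        ((((μ t) A).toReal)⁻¹ * (∫ h in A, q h ∂(μ t))
          - (((μ t) Aᶜ).toReal)⁻¹ * ∫ h in Aᶜ, q h ∂(μ t)) t := by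
  intro t
  set Z : ℝ → ℝ := fun s => ∫ h, Real.exp (s * q h) ∂π with hZdef
  set F : ℝ → ℝ := fun s => ∫ h in A, Real.exp (s * q h) ∂π with hFdef
  set G : ℝ → ℝ := fun s => ∫ h in Aᶜ, Real.exp (s * q h) ∂π with hGdef
  have hZpos : ∀ s, 0 < Z s := by
    intro s
    have h1 : ∀ h, Real.exp (-(|s| * C)) ≤ Real.exp (s * q h) := by
      intro h
      refine Real.exp_le_exp.2 ?_
      have : |s * q h| ≤ |s| * C := by
        rw [abs_mul]; exact mul_le_mul_of_nonneg_left (hqC h) (abs_nonneg s)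
      linarith [neg_abs_le (s * q h)]
    calc (0 : ℝ) < Real.exp (-(|s| * C)) := Real.exp_pos _
      _ = ∫ _, Real.exp (-(|s| * C)) ∂π := by simp
      _ ≤ Z s := integral_mono (integrable_const _) (exp_int π q hq hqC s) h1
  -- p s = F s / Z s
  have hFZ : ∀ s, Z s = F s + G s := fun s =>
    (integral_add_compl hA (exp_int π q hq hqC s)).symm
  have hpeq : ∀ (s : ℝ) (B : Set H), MeasurableSet B →
      ((μ s) B).toReal = (∫ h in B, Real.exp (s * q h) ∂π) / Z s := by
    intro s B hB
    rw [hμ s, withDensity_apply _ hB]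
    have := integral_eq_lintegral_of_nonneg_ae (μ := π.restrict B)
      (f := fun h => Real.exp (s * q h) / Z s)
      (Filter.Eventually.of_forall fun h => by positivity)
      ((hq.const_mul s).exp.div_const _).aestronglyMeasurable
    rw [integral_div] at this
    exact this.symm
  have hqint : ∀ (s : ℝ) (B : Set H), MeasurableSet B →
      ∫ h in B, q h ∂(μ s) = (∫ h in B, q h * Real.exp (s * q h) ∂π) / Z s := by
    intro s B hB
    rw [hμ s]
    have hm : Measurable fun h => (Real.exp (s * q h) / Z s).toNNReal :=
      ((hq.const_mul s).exp.div_const _).real_toNNReal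
    rw [show (fun h => ENNReal.ofReal (Real.exp (s * q h) / Z s))
        = fun h => ((Real.exp (s * q h) / Z s).toNNReal : ℝ≥0∞) from rfl,
      setIntegral_withDensity_eq_setIntegral_smul hm q hB]
    have heq2 : ∫ x in B, (Real.exp (s * q x) / Z s).toNNReal • q x ∂π
        = ∫ x in B, (q x * Real.exp (s * q x)) / Z s ∂π := by
      refine setIntegral_congr_fun hB fun h _ => ?_
      rw [NNReal.smul_def, smul_eq_mul, Real.coe_toNNReal _ (by positivity)]
      ring
    rw [heq2, integral_div]
  have hppos := (hp t).1
  have hplt := (hp t).2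
  have hFpos : ∀ s, 0 < F s := by
    intro s
    have := (hp s).1
    rw [hpeq s A hA] at this
    exact (div_pos_iff.1 this).resolve_right (fun ⟨_, h⟩ => absurd (hZpos s) (not_lt.2 h.le)) |>.1
  have hGpos : ∀ s, 0 < G s := by
    intro s
    have h1 : F s / Z s < 1 := by rw [← hpeq s A hA]; exact (hp s).2
    have : F s < Z s := (div_lt_one (hZpos s)).1 h1
    rw [hFZ s] at this
    linarith
  -- the function equals log F - log G
  have heq : (fun s => Real.log (((μ s) A).toReal / (1 - ((μ s) A).toReal)))
      = fun s => Real.log (F s) - Real.log (G s) := by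
    funext s
    rw [hpeq s A hA]
    have hz := (hZpos s).ne'
    have hg := (hGpos s).ne'
    have hf := (hFpos s).ne'
    have h1 : 1 - F s / Z s = G s / Z s := by
      field_simp
      rw [hFZ s]; ring
    have h2 : F s / Z s / (G s / Z s) = F s / G s := by
      field_simp
    rw [h1, h2, Real.log_div (hFpos s).ne' (hGpos s).ne']
  rw [heq]
  -- derivative
  have hdF := deriv_set_exp π q hq hqC A t
  have hdG := deriv_set_exp π q hq hqC Aᶜ t
  have hd := (hdF.log (hFpos t).ne').sub (hdG.log (hGpos t).ne')
  convert hd using 1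
  case e'_4 => rfl
  case e'_5 => rfl
  case e'_8 => rfl
  rw [hpeq t A hA, hpeq t Aᶜ hA.compl, hqint t A hA, hqint t Aᶜ hA.compl]
  have hZ := (hZpos t).ne'
  have key : ∀ a b : ℝ, b ≠ 0 → (b / Z t)⁻¹ * (a / Z t) = a / b := by
    intro a b hb
    field_simp
  rw [key _ _ (hFpos t).ne', key _ _ (hGpos t).ne']
end
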